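/- arXiv:2012.01984 — 4 statements merged into one kernel-verified Lean document; each statement's English description precedes it below -/
import Mathlib

section
/- Let $y_2$ be a solution of the Riccati equation $y' + f_2(t)y^2 + g_2(t)y + h_2(t) = 0$ on $[t_0, \tau_0)$ (with $t_0 < \tau_0 \le +\infty$), and let $\eta_1, \eta_2$ be continuously differentiable functions on $[t_0, \tau_0)$ satisfying the differential inequalities $\eta_k' + f_k(t)\eta_k^2 + g_k(t)\eta_k + h_k(t) \ge 0$ on $[t_0, \tau_0)$ for $k = 1, 2$, with $y_2(t_0) \le \eta_k(t_0)$ for $k = 1, 2$. Assume $f_1(t) \ge 0$ on $[t_0, \tau_0)$ and that for some $\gamma \in [y_2(t_0), \eta_1(t_0)]$ the inequality $\gamma - y_2(t_0) + \int_{t_0}^{t} \exp\{\int_{t_0}^{\tau}[f_1(s)(\eta_1(s) + \eta_2(s)) + g_1(s)]\,ds\}\,[(f_2(\tau) - f_1(\tau))\,y_2(\tau)^2 + (g_2(\tau) - g_1(\tau))\,y_2(\tau) + h_2(\tau) - h_1(\tau)]\,d\tau \ge 0$ holds for all $t \in [t_0, \tau_0)$. Then the Riccati equation $y' + f_1(t)y^2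 + g_1(t)y + h_1(t) = 0$ has a solution $y_1$ on the whole interval $[t_0, \tau_0)$ with $y_1(t_0) \ge \gamma$ and $y_1(t) \ge y_2(t)$ for all $t \in [t_0, \tau_0)$. -/
open Set intervalIntegral

lemma my_hasDerivWithinAt_singleton (f : ℝ → ℝ) (d x : ℝ) :
    HasDerivWithinAt f d {x} x := by
  rw [HasDerivWithinAt, hasDerivAtFilter_iff_isLittleO, nhdsWithin_singleton]
  simp [Asymptotics.isLittleO_pure]

lemma mono_aux {a b : ℝ} {f f' : ℝ → ℝ}
    (hf : ∀ t ∈ Icc a b, HasDerivWithinAt f (f' t) (Icc a b) t)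
    (h0 : ∀ t ∈ Icc a b, 0 ≤ f' t) :
    ∀ t ∈ Icc a b, f a ≤ f t := by
  intro t ht
  have hc : ContinuousOn f (Icc a b) := fun s hs => (hf s hs).continuousWithinAt
  have hmono : MonotoneOn f (Icc a b) := by
    apply monotoneOn_of_hasDerivWithinAt_nonneg (convex_Icc a b) hc (f' := f')
    · intro x hx
      rw [interior_Icc] at hx
      exact (((hf x (Ioo_subset_Icc_self hx)).hasDerivAt
        (Icc_mem_nhds hx.1 hx.2)).hasDerivWithinAt)
    · intro x hx
      rw [interior_Icc] at hx
      exact h0 x (Ioo_subset_Icc_self hx)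
  exact hmono (left_mem_Icc.2 (ht.1.trans ht.2)) ht ht.1

lemma const_aux {a b : ℝ} {f : ℝ → ℝ}
    (hf : ∀ t ∈ Icc a b, HasDerivWithinAt f 0 (Icc a b) t) :
    ∀ t ∈ Icc a b, f t = f a := by
  intro t ht
  have h1 := mono_aux hf (fun t _ => le_refl 0) t ht
  have h2 := mono_aux (f' := fun _ => 0) (f := fun s => -f s)
    (fun t ht => by have h := (hf t ht).neg; rw [neg_zero] at h; exact h) (fun t _ => le_refl 0) t ht
  simp only [neg_le_neg_iff] at h2
  linarith

lemma ext_aux {a b : ℝ} (hab : a ≤ b) {f : ℝ → ℝ} (hf : ContinuousOn f (Icc a b)) :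
    ∃ g : ℝ → ℝ, Continuous g ∧ EqOn g f (Icc a b) := by
  refine ⟨IccExtend hab ((Icc a b).restrict f), hf.restrict.Icc_extend', fun t ht => ?_⟩
  rw [IccExtend_of_mem hab _ ht]
  rfl

lemma gron_aux {a b : ℝ} (hab : a ≤ b) {d d' L : ℝ → ℝ}
    (hL : ContinuousOn L (Icc a b))
    (hd : ∀ t ∈ Icc a b, HasDerivWithinAt d (d' t) (Icc a b) t)
    (hi : ∀ t ∈ Icc a b, 0 ≤ d' t + L t * d t)
    (h0 : 0 ≤ d a) : ∀ t ∈ Icc a b, 0 ≤ d t := by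
  obtain ⟨Lx, hLc, hLeq⟩ := ext_aux hab hL
  set Λ : ℝ → ℝ := fun t => ∫ s in a..t, Lx s with hΛdef
  have hΛd : ∀ t : ℝ, HasDerivAt Λ (Lx t) t := fun t =>
    (hLc.integral_hasStrictDerivAt a t).hasDerivAt
  set φ : ℝ → ℝ := fun t => Real.exp (Λ t) * d t with hφdef
  have hφd : ∀ t ∈ Icc a b, HasDerivWithinAt φ
      (Real.exp (Λ t) * (d' t + L t * d t)) (Icc a b) t := by
    intro t ht
    have h1 : HasDerivWithinAt (fun u => Real.exp (Λ u))
        (Real.exp (Λ t) * Lx t) (Icc a b) t := ((hΛd t).exp).hasDerivWithinAt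
    have h2 := h1.mul (hd t ht)
    refine h2.congr_deriv ?_
    rw [hLeq ht]; ring
  have key := mono_aux hφd (fun t ht => mul_nonneg (Real.exp_nonneg _) (hi t ht))
  intro t ht
  have h2 := key t ht
  have h3 : φ a = d a := by simp [hφdef, hΛdef]
  have h4 : 0 < Real.exp (Λ t) := Real.exp_pos _
  have h5 : 0 ≤ φ t := by rw [h3] at h2; linarith
  have : φ t = Real.exp (Λ t) * d t := rfl
  nlinarith

lemma glue_aux {a b c' : ℝ} {y z : ℝ → ℝ} {v : ℝ → ℝ → ℝ} (hab : a ≤ b) (hbc : b ≤ c')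
    (hy : ∀ t ∈ Icc a b, HasDerivWithinAt y (v t (y t)) (Icc a b) t)
    (hz : ∀ t ∈ Icc b c', HasDerivWithinAt z (v t (z t)) (Icc b c') t)
    (hyz : z b = y b) :
    ∃ w : ℝ → ℝ, EqOn w y (Icc a b) ∧
      ∀ t ∈ Icc a c', HasDerivWithinAt w (v t (w t)) (Icc a c') t := by
  classical
  refine ⟨fun t => if t ≤ b then y t else z t, fun t ht => if_pos ht.2, ?_⟩
  set w : ℝ → ℝ := fun t => if t ≤ b then y t else z t with hw
  have hwy : EqOn w y (Icc a b) := fun t ht => if_pos ht.2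
  have hwz : EqOn w z (Icc b c') := by
    intro t ht
    rcases eq_or_lt_of_le ht.1 with h | h
    · simp only [hw, ← h, if_pos le_rfl, hyz]
    · simp only [hw, if_neg (not_le.2 h)]
  have hIcc : Icc a b ∪ Icc b c' = Icc a c' := Icc_union_Icc_eq_Icc hab hbc
  intro t ht
  rcases lt_trichotomy t b with h | h | h
  · have h1 : HasDerivWithinAt w (v t (w t)) (Icc a b) t := by
      have := (hy t ⟨ht.1, h.le⟩).congr hwy (hwy ⟨ht.1, h.le⟩)
      rwa [hwy ⟨ht.1, h.le⟩]
    apply h1.mono_of_mem_nhdsWithin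
    have : Icc a c' ∩ Iio b ⊆ Icc a b := fun x hx => ⟨hx.1.1, hx.2.le⟩
    exact Filter.mem_of_superset (Filter.inter_mem self_mem_nhdsWithin
      (mem_nhdsWithin_of_mem_nhds (Iio_mem_nhds h))) this
  · subst h
    have h1 : HasDerivWithinAt w (v t (w t)) (Icc a t) t := by
      have := (hy t ⟨ht.1, le_rfl⟩).congr hwy (hwy ⟨ht.1, le_rfl⟩)
      rwa [hwy ⟨ht.1, le_rfl⟩]
    have h2 : HasDerivWithinAt w (v t (w t)) (Icc t c') t := by
      have := (hz t ⟨le_rfl, ht.2⟩).congr hwz (hwz ⟨le_rfl, ht.2⟩)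
      rwa [hwz ⟨le_rfl, ht.2⟩]
    have := h1.union h2
    rwa [Icc_union_Icc_eq_Icc ht.1 ht.2] at this
  · have h1 : HasDerivWithinAt w (v t (w t)) (Icc b c') t := by
      have := (hz t ⟨h.le, ht.2⟩).congr hwz (hwz ⟨h.le, ht.2⟩)
      rwa [hwz ⟨h.le, ht.2⟩]
    apply h1.mono_of_mem_nhdsWithin
    have : Icc a c' ∩ Ioi b ⊆ Icc b c' := fun x hx => ⟨hx.2.le, hx.1.2⟩
    exact Filter.mem_of_superset (Filter.inter_mem self_mem_nhdsWithin
      (mem_nhdsWithin_of_mem_nhds (Ioi_mem_nhds h))) this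
set_option maxHeartbeats 4000000 in
/-- Theorem 2.1: comparison theorem for Riccati equations. If `y₂` solves the second
Riccati equation on `[t₀, τ₀)` and `η₁, η₂` are C¹ solutions of the corresponding
differential inequalities with `y₂ t₀ ≤ ηₖ t₀`, `f₁ ≥ 0`, and the stated integral
inequality holds for some `γ ∈ [y₂ t₀, η₁ t₀]`, then the first Riccati equation has a
solution `y₁` on all of `[t₀, τ₀)` with `y₁ t₀ ≥ γ` and `y₁ ≥ y₂`. -/
theorem riccati_comparison
    (t₀ : ℝ) (τ₀ : EReal) (hτ₀ : (t₀ : EReal) < τ₀)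
    (f₁ f₂ g₁ g₂ h₁ h₂ : ℝ → ℝ)
    (hf₁ : ContinuousOn f₁ (Ici t₀)) (hf₂ : ContinuousOn f₂ (Ici t₀))
    (hg₁ : ContinuousOn g₁ (Ici t₀)) (hg₂ : ContinuousOn g₂ (Ici t₀))
    (hh₁ : ContinuousOn h₁ (Ici t₀)) (hh₂ : ContinuousOn h₂ (Ici t₀))
    (I : Set ℝ) (hI : I = {t : ℝ | t₀ ≤ t ∧ (t : EReal) < τ₀})
    (y₂ : ℝ → ℝ)
    (hy₂ : ∀ t ∈ I, HasDerivWithinAt y₂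
      (-(f₂ t * y₂ t ^ 2 + g₂ t * y₂ t + h₂ t)) I t)
    (η₁ η₂ η₁' η₂' : ℝ → ℝ)
    (hη₁ : ∀ t ∈ I, HasDerivWithinAt η₁ (η₁' t) I t)
    (hη₂ : ∀ t ∈ I, HasDerivWithinAt η₂ (η₂' t) I t)
    (hη₁c : ContinuousOn η₁' I) (hη₂c : ContinuousOn η₂' I)
    (hineq₁ : ∀ t ∈ I, 0 ≤ η₁' t + f₁ t * η₁ t ^ 2 + g₁ t * η₁ t + h₁ t)
    (hineq₂ : ∀ t ∈ I, 0 ≤ η₂' t + f₂ t * η₂ t ^ 2 + g₂ t * η₂ t + h₂ t)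
    (hinit₁ : y₂ t₀ ≤ η₁ t₀) (hinit₂ : y₂ t₀ ≤ η₂ t₀)
    (hf₁pos : ∀ t ∈ I, 0 ≤ f₁ t)
    (γ : ℝ) (hγ : γ ∈ Icc (y₂ t₀) (η₁ t₀))
    (hint : ∀ t ∈ I, 0 ≤ γ - y₂ t₀ +
      ∫ τ in t₀..t, Real.exp (∫ s in t₀..τ, f₁ s * (η₁ s + η₂ s) + g₁ s) *
        ((f₂ τ - f₁ τ) * y₂ τ ^ 2 + (g₂ τ - g₁ τ) * y₂ τ + h₂ τ - h₁ τ)) :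
    ∃ y₁ : ℝ → ℝ,
      (∀ t ∈ I, HasDerivWithinAt y₁
        (-(f₁ t * y₁ t ^ 2 + g₁ t * y₁ t + h₁ t)) I t) ∧
      γ ≤ y₁ t₀ ∧ ∀ t ∈ I, y₂ t ≤ y₁ t := by
  classical
  have hco : ∀ {t : ℝ}, t ∈ I → t₀ ≤ t := fun ht => by rw [hI] at ht; exact ht.1
  have hlt : ∀ {t : ℝ}, t ∈ I → (t : EReal) < τ₀ := fun ht => by rw [hI] at ht; exact ht.2
  have ht₀I : t₀ ∈ I := by rw [hI]; exact ⟨le_rfl, hτ₀⟩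
  have hIsub : ∀ {T : ℝ}, T ∈ I → Icc t₀ T ⊆ I := by
    intro T hT t ht
    rw [hI]
    exact ⟨ht.1, lt_of_le_of_lt (EReal.coe_le_coe_iff.2 ht.2) (hlt hT)⟩
  have cy₂ : ContinuousOn y₂ I := fun t ht => (hy₂ t ht).continuousWithinAt
  have cη₁ : ContinuousOn η₁ I := fun t ht => (hη₁ t ht).continuousWithinAt
  have cη₂ : ContinuousOn η₂ I := fun t ht => (hη₂ t ht).continuousWithinAt
  set v : ℝ → ℝ → ℝ := fun t x => -(f₁ t * x ^ 2 + g₁ t * x + h₁ t) with hvdef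
  -- the comparison bounds
  have comp : ∀ T (hT : T ∈ I) (y : ℝ → ℝ), y t₀ = γ →
      (∀ t ∈ Icc t₀ T, HasDerivWithinAt y (v t (y t)) (Icc t₀ T) t) →
      ∀ t ∈ Icc t₀ T, y₂ t ≤ y t ∧ y t ≤ η₁ t := by
    intro T hT y hy0 hy
    have ht₀T : t₀ ≤ T := hco hT
    have hsub : Icc t₀ T ⊆ I := hIsub hT
    have hIci : Icc t₀ T ⊆ Ici t₀ := fun x hx => hx.1
    have cy : ContinuousOn y (Icc t₀ T) := fun s hs => (hy s hs).continuousWithinAt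
    -- Step (a): y₂ ≤ η₂
    have ha : ∀ t ∈ Icc t₀ T, y₂ t ≤ η₂ t := by
      have key := gron_aux (a := t₀) (b := T) ht₀T
        (L := fun t => f₂ t * (η₂ t + y₂ t) + g₂ t)
        (d := fun t => η₂ t - y₂ t)
        (d' := fun t => η₂' t + (f₂ t * y₂ t ^ 2 + g₂ t * y₂ t + h₂ t))
        (((hf₂.mono hIci).mul ((cη₂.mono hsub).add (cy₂.mono hsub))).add (hg₂.mono hIci))
        ?_ ?_ (show (0:ℝ) ≤ η₂ t₀ - y₂ t₀ by linarith [hinit₂])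
      · intro t ht
        have k : (0:ℝ) ≤ η₂ t - y₂ t := key t ht
        linarith
      · intro t ht
        have h1 := ((hη₂ t (hsub ht)).mono hsub).sub ((hy₂ t (hsub ht)).mono hsub)
        refine h1.congr_deriv ?_
        ring
      · intro t ht
        have h := hineq₂ t (hsub ht)
        have e : η₂' t + (f₂ t * y₂ t ^ 2 + g₂ t * y₂ t + h₂ t) +
            (f₂ t * (η₂ t + y₂ t) + g₂ t) * (η₂ t - y₂ t)
            = η₂' t + f₂ t * η₂ t ^ 2 + g₂ t * η₂ t + h₂ t := by ring
        show (0:ℝ) ≤ η₂' t + (f₂ t * y₂ t ^ 2 + g₂ t * y₂ t + h₂ t) +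
            (f₂ t * (η₂ t + y₂ t) + g₂ t) * (η₂ t - y₂ t)
        rw [e]; exact h
    -- Step (b): y ≤ η₁
    have hb : ∀ t ∈ Icc t₀ T, y t ≤ η₁ t := by
      have key := gron_aux (a := t₀) (b := T) ht₀T
        (L := fun t => f₁ t * (η₁ t + y t) + g₁ t)
        (d := fun t => η₁ t - y t)
        (d' := fun t => η₁' t + (f₁ t * y t ^ 2 + g₁ t * y t + h₁ t))
        (((hf₁.mono hIci).mul ((cη₁.mono hsub).add cy)).add (hg₁.mono hIci))
        ?_ ?_ (show (0:ℝ) ≤ η₁ t₀ - y t₀ by rw [hy0]; linarith [hγ.2])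
      · intro t ht
        have k : (0:ℝ) ≤ η₁ t - y t := key t ht
        linarith
      · intro t ht
        have h1 := ((hη₁ t (hsub ht)).mono hsub).sub (hy t ht)
        refine h1.congr_deriv ?_
        simp only [hvdef]
        ring
      · intro t ht
        have h := hineq₁ t (hsub ht)
        have e : η₁' t + (f₁ t * y t ^ 2 + g₁ t * y t + h₁ t) +
            (f₁ t * (η₁ t + y t) + g₁ t) * (η₁ t - y t)
            = η₁' t + f₁ t * η₁ t ^ 2 + g₁ t * η₁ t + h₁ t := by ring
        show (0:ℝ) ≤ η₁' t + (f₁ t * y t ^ 2 + g₁ t * y t + h₁ t) +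
            (f₁ t * (η₁ t + y t) + g₁ t) * (η₁ t - y t)
        rw [e]; exact h
    -- Step (c): y₂ ≤ y via the integral condition
    set c := γ - y₂ t₀ with hcdef
    have hc0 : 0 ≤ c := by rw [hcdef]; linarith [hγ.1]
    obtain ⟨aE, haC, haEq⟩ := ext_aux ht₀T
      (f := fun t => f₁ t * (η₁ t + η₂ t) + g₁ t)
      (((hf₁.mono hIci).mul ((cη₁.mono hsub).add (cη₂.mono hsub))).add (hg₁.mono hIci))
    obtain ⟨QE, hQC, hQEq⟩ := ext_aux ht₀T
      (f := fun t => (f₂ t - f₁ t) * y₂ t ^ 2 + (g₂ t - g₁ t) * y₂ t + h₂ t - h₁ t)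
      ((((((hf₂.mono hIci).sub (hf₁.mono hIci)).mul ((cy₂.mono hsub).pow 2)).add
        (((hg₂.mono hIci).sub (hg₁.mono hIci)).mul (cy₂.mono hsub))).add
        (hh₂.mono hIci)).sub (hh₁.mono hIci))
    obtain ⟨bE, hbC, hbEq⟩ := ext_aux ht₀T
      (f := fun t => f₁ t * (y t + y₂ t) + g₁ t)
      (((hf₁.mono hIci).mul (cy.add (cy₂.mono hsub))).add (hg₁.mono hIci))
    set A : ℝ → ℝ := fun t => ∫ s in t₀..t, aE s with hAdef
    have hAd : ∀ t : ℝ, HasDerivAt A (aE t) t := fun t =>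
      (haC.integral_hasStrictDerivAt t₀ t).hasDerivAt
    have hAc : Continuous A := by
      rw [continuous_iff_continuousAt]; exact fun t => (hAd t).continuousAt
    set Bi : ℝ → ℝ := fun t => ∫ s in t₀..t, bE s with hBidef
    have hBid : ∀ t : ℝ, HasDerivAt Bi (bE t) t := fun t =>
      (hbC.integral_hasStrictDerivAt t₀ t).hasDerivAt
    have hBic : Continuous Bi := by
      rw [continuous_iff_continuousAt]; exact fun t => (hBid t).continuousAt
    set G : ℝ → ℝ := fun t => ∫ s in t₀..t, Real.exp (A s) * QE s with hGdef
    have hGd : ∀ t : ℝ, HasDerivAt G (Real.exp (A t) * QE t) t := fun t =>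
      (((Real.continuous_exp.comp hAc).mul hQC).integral_hasStrictDerivAt t₀ t).hasDerivAt
    set Hq : ℝ → ℝ := fun t => c + ∫ s in t₀..t, Real.exp (Bi s) * QE s with hHqdef
    have hHd : ∀ t : ℝ, HasDerivAt Hq (Real.exp (Bi t) * QE t) t := fun t =>
      ((((Real.continuous_exp.comp hBic).mul hQC).integral_hasStrictDerivAt t₀ t).hasDerivAt).const_add c
    have hintJ : ∀ t ∈ Icc t₀ T, 0 ≤ c + G t := by
      intro t ht
      have h := hint t (hsub ht)
      have e : (∫ τ in t₀..t, Real.exp (∫ s in t₀..τ, f₁ s * (η₁ s + η₂ s) + g₁ s) *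
          ((f₂ τ - f₁ τ) * y₂ τ ^ 2 + (g₂ τ - g₁ τ) * y₂ τ + h₂ τ - h₁ τ)) = G t := by
        apply intervalIntegral.integral_congr
        intro τ hτ
        rw [uIcc_of_le ht.1] at hτ
        have hτJ : τ ∈ Icc t₀ T := ⟨hτ.1, hτ.2.trans ht.2⟩
        have e2 : (∫ s in t₀..τ, f₁ s * (η₁ s + η₂ s) + g₁ s) = A τ := by
          apply intervalIntegral.integral_congr
          intro u hu
          rw [uIcc_of_le hτ.1] at hu
          exact (haEq ⟨hu.1, hu.2.trans hτJ.2⟩).symm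
        show Real.exp (∫ s in t₀..τ, f₁ s * (η₁ s + η₂ s) + g₁ s) *
            ((f₂ τ - f₁ τ) * y₂ τ ^ 2 + (g₂ τ - g₁ τ) * y₂ τ + h₂ τ - h₁ τ)
            = Real.exp (A τ) * QE τ
        rw [e2, hQEq hτJ]
      rw [e] at h
      linarith
    -- χ : exp(Bi) * (y - y₂) - Hq is constant 0
    set χ : ℝ → ℝ := fun t => Real.exp (Bi t) * (y t - y₂ t) - Hq t with hχdef
    have hχd : ∀ t ∈ Icc t₀ T, HasDerivWithinAt χ 0 (Icc t₀ T) t := by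
      intro t ht
      have hBd : HasDerivAt (fun u => Real.exp (Bi u)) (Real.exp (Bi t) * bE t) t :=
        (hBid t).exp
      have hyd : HasDerivWithinAt (fun u => y u - y₂ u)
          (v t (y t) - (-(f₂ t * y₂ t ^ 2 + g₂ t * y₂ t + h₂ t))) (Icc t₀ T) t :=
        (hy t ht).sub ((hy₂ t (hsub ht)).mono hsub)
      have h1 := (hBd.hasDerivWithinAt.mul hyd).sub (hHd t).hasDerivWithinAt
      refine h1.congr_deriv ?_
      rw [hbEq ht, hQEq ht]
      simp only [hvdef]
      ring
    have hχ0 : ∀ t ∈ Icc t₀ T, χ t = 0 := by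
      intro t ht
      have h := const_aux hχd t ht
      have hBi0 : Bi t₀ = 0 := intervalIntegral.integral_same
      have hHq0 : Hq t₀ = c := by
        rw [hHqdef]; simp [intervalIntegral.integral_same]
      rw [h, hχdef]
      simp only [hBi0, hHq0, Real.exp_zero, hy0, one_mul, hcdef]
      ring
    -- ψ : Hq - exp(Bi - A) * (c + G) is nondecreasing from 0
    set ψ : ℝ → ℝ := fun t => Hq t - Real.exp (Bi t - A t) * (c + G t) with hψdef
    have hψd : ∀ t ∈ Icc t₀ T, HasDerivWithinAt ψ
        ((aE t - bE t) * Real.exp (Bi t - A t) * (c + G t)) (Icc t₀ T) t := by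
      intro t ht
      have h1 : HasDerivAt (fun u => Real.exp (Bi u - A u))
          (Real.exp (Bi t - A t) * (bE t - aE t)) t := ((hBid t).sub (hAd t)).exp
      have h3 : HasDerivAt (fun u => c + G u) (Real.exp (A t) * QE t) t :=
        (hGd t).const_add c
      have h4 := (hHd t).sub (h1.mul h3)
      apply h4.hasDerivWithinAt.congr_deriv
      rw [Real.exp_sub]
      field_simp
      ring
    have hψpos : ∀ t ∈ Icc t₀ T, 0 ≤ (aE t - bE t) * Real.exp (Bi t - A t) * (c + G t) := by
      intro t ht
      have h1 : 0 ≤ aE t - bE t := by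
        rw [haEq ht, hbEq ht]
        show (0:ℝ) ≤ (f₁ t * (η₁ t + η₂ t) + g₁ t) - (f₁ t * (y t + y₂ t) + g₁ t)
        have h2 := hf₁pos t (hsub ht)
        have h3 := ha t ht
        have h4 := hb t ht
        nlinarith
      exact mul_nonneg (mul_nonneg h1 (Real.exp_nonneg _)) (hintJ t ht)
    have hψmono := mono_aux hψd hψpos
    have hψ0 : ψ t₀ = 0 := by
      have hBi0 : Bi t₀ = 0 := intervalIntegral.integral_same
      have hA0 : A t₀ = 0 := intervalIntegral.integral_same
      have hG0 : G t₀ = 0 := intervalIntegral.integral_same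
      have hHq0 : Hq t₀ = c := by
        rw [hHqdef]; simp [intervalIntegral.integral_same]
      rw [hψdef]
      simp only [hBi0, hA0, hG0, hHq0, sub_zero, Real.exp_zero, one_mul, add_zero]
      ring
    intro t ht
    refine ⟨?_, hb t ht⟩
    have h1 := hψmono t ht
    rw [hψ0] at h1
    have h2 : 0 ≤ Real.exp (Bi t - A t) * (c + G t) :=
      mul_nonneg (Real.exp_nonneg _) (hintJ t ht)
    have h3 : 0 ≤ Hq t := by
      have : ψ t = Hq t - Real.exp (Bi t - A t) * (c + G t) := rfl
      linarith [this ▸ h1]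
    have h4 := hχ0 t ht
    have h5 : Real.exp (Bi t) * (y t - y₂ t) = Hq t := by
      have : χ t = Real.exp (Bi t) * (y t - y₂ t) - Hq t := rfl
      linarith [this ▸ h4]
    nlinarith [Real.exp_pos (Bi t)]
  -- existence on each compact subinterval
  have master : ∀ T, T ∈ I → ∃ y : ℝ → ℝ, y t₀ = γ ∧
      ∀ t ∈ Icc t₀ T, HasDerivWithinAt y (v t (y t)) (Icc t₀ T) t := by
    intro T hT
    have ht₀T : t₀ ≤ T := hco hT
    have hsub : Icc t₀ T ⊆ I := hIsub hT
    have hIci : Icc t₀ T ⊆ Ici t₀ := fun x hx => hx.1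
    obtain ⟨Ry, hRy⟩ := isCompact_Icc.exists_bound_of_continuousOn (cy₂.mono hsub)
    obtain ⟨Rη, hRη⟩ := isCompact_Icc.exists_bound_of_continuousOn (cη₁.mono hsub)
    obtain ⟨R₀, hR₀def⟩ : ∃ R₀ : ℝ, R₀ = max Ry Rη := ⟨_, rfl⟩
    have hRyR : Ry ≤ R₀ := by rw [hR₀def]; exact le_max_left _ _
    have hRηR : Rη ≤ R₀ := by rw [hR₀def]; exact le_max_right _ _
    have hbdd : ∀ (y : ℝ → ℝ) (t : ℝ), t ∈ Icc t₀ T → y₂ t ≤ y t → y t ≤ η₁ t →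
        |y t| ≤ R₀ := by
      intro y t ht hl hu
      have h1 := hRy t ht
      have h2 := hRη t ht
      rw [Real.norm_eq_abs, abs_le] at h1 h2
      rw [abs_le]
      exact ⟨by linarith, by linarith⟩
    have hR₀0 : 0 ≤ R₀ := by
      have h1 := hRy t₀ ⟨le_rfl, ht₀T⟩
      have h2 := norm_nonneg (y₂ t₀)
      linarith
    obtain ⟨Cf, hCf⟩ := isCompact_Icc.exists_bound_of_continuousOn (hf₁.mono hIci)
    obtain ⟨Cg, hCg⟩ := isCompact_Icc.exists_bound_of_continuousOn (hg₁.mono hIci)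
    obtain ⟨Ch, hCh⟩ := isCompact_Icc.exists_bound_of_continuousOn (hh₁.mono hIci)
    have hCf0 : 0 ≤ Cf := (norm_nonneg _).trans (hCf t₀ ⟨le_rfl, ht₀T⟩)
    have hCg0 : 0 ≤ Cg := (norm_nonneg _).trans (hCg t₀ ⟨le_rfl, ht₀T⟩)
    have hCh0 : 0 ≤ Ch := (norm_nonneg _).trans (hCh t₀ ⟨le_rfl, ht₀T⟩)
    obtain ⟨C, hCdef⟩ : ∃ C : ℝ, C = Cf * (R₀ + 1) ^ 2 + Cg * (R₀ + 1) + Ch := ⟨_, rfl⟩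
    have hC0 : 0 ≤ C := by
      rw [hCdef]
      have h1 : (0:ℝ) ≤ (R₀ + 1) ^ 2 := sq_nonneg _
      nlinarith
    have hvbound : ∀ t ∈ Icc t₀ T, ∀ x : ℝ, |x| ≤ R₀ + 1 → |v t x| ≤ C := by
      intro t ht x hx
      have h1 := hCf t ht
      have h2 := hCg t ht
      have h3 := hCh t ht
      rw [Real.norm_eq_abs] at h1 h2 h3
      have h4 : (0:ℝ) ≤ |x| := abs_nonneg x
      have h5 : (0:ℝ) ≤ |f₁ t| := abs_nonneg _
      have h6 : (0:ℝ) ≤ |g₁ t| := abs_nonneg _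
      have e : |v t x| ≤ |f₁ t| * |x| ^ 2 + |g₁ t| * |x| + |h₁ t| := by
        simp only [hvdef]
        calc |(-(f₁ t * x ^ 2 + g₁ t * x + h₁ t))|
            = |f₁ t * x ^ 2 + g₁ t * x + h₁ t| := abs_neg _
          _ ≤ |f₁ t * x ^ 2 + g₁ t * x| + |h₁ t| := abs_add_le _ _
          _ ≤ |f₁ t * x ^ 2| + |g₁ t * x| + |h₁ t| := by
              linarith [abs_add_le (f₁ t * x ^ 2) (g₁ t * x)]
          _ = |f₁ t| * |x| ^ 2 + |g₁ t| * |x| + |h₁ t| := by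
              rw [abs_mul, abs_mul, abs_pow]
      have b0 : |x| ^ 2 ≤ (R₀ + 1) ^ 2 := by nlinarith
      have b1 : |f₁ t| * |x| ^ 2 ≤ Cf * (R₀ + 1) ^ 2 :=
        mul_le_mul h1 b0 (by positivity) hCf0
      have b2 : |g₁ t| * |x| ≤ Cg * (R₀ + 1) := mul_le_mul h2 hx h4 hCg0
      rw [hCdef]
      linarith
    obtain ⟨K₀, hK₀def⟩ : ∃ K₀ : ℝ, K₀ = Cf * (2 * (R₀ + 1)) + Cg := ⟨_, rfl⟩
    obtain ⟨K, hKdef⟩ : ∃ K : NNReal, K = K₀.toNNReal := ⟨_, rfl⟩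
    have hlip : ∀ t ∈ Icc t₀ T, ∀ x₀ : ℝ, |x₀| ≤ R₀ →
        LipschitzOnWith K (v t) (Metric.closedBall x₀ 1) := by
      intro t ht x₀ hx₀
      apply LipschitzOnWith.of_dist_le_mul
      intro x hx x' hx'
      rw [Metric.mem_closedBall, Real.dist_eq] at hx hx'
      rw [Real.dist_eq, Real.dist_eq]
      have hxb : |x| ≤ R₀ + 1 := by
        have h := abs_add_le (x - x₀) x₀
        rw [sub_add_cancel] at h
        linarith
      have hxb' : |x'| ≤ R₀ + 1 := by
        have h := abs_add_le (x' - x₀) x₀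
        rw [sub_add_cancel] at h
        linarith
      have e : v t x - v t x' = -((f₁ t * (x + x') + g₁ t) * (x - x')) := by
        simp only [hvdef]; ring
      rw [e, abs_neg, abs_mul]
      have hf := hCf t ht
      have hg := hCg t ht
      rw [Real.norm_eq_abs] at hf hg
      have h2 : |f₁ t * (x + x') + g₁ t| ≤ K₀ := by
        rw [hK₀def]
        calc |f₁ t * (x + x') + g₁ t| ≤ |f₁ t * (x + x')| + |g₁ t| := abs_add_le _ _
          _ = |f₁ t| * |x + x'| + |g₁ t| := by rw [abs_mul]
          _ ≤ Cf * (2 * (R₀ + 1)) + Cg := by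
              have h3 : |x + x'| ≤ 2 * (R₀ + 1) := (abs_add_le x x').trans (by linarith)
              have h4 : (0:ℝ) ≤ |f₁ t| := abs_nonneg _
              nlinarith [abs_nonneg (x + x')]
      have hKge : K₀ ≤ (K : ℝ) := by rw [hKdef]; exact Real.le_coe_toNNReal _
      nlinarith [abs_nonneg (x - x')]
    obtain ⟨δ, hδdef⟩ : ∃ δ : ℝ, δ = 1 / (C + 1) := ⟨_, rfl⟩
    have hδpos : 0 < δ := by
      rw [hδdef]
      exact one_div_pos.2 (by linarith)
    have hcont : ∀ x : ℝ, ContinuousOn (fun t => v t x) (Icc t₀ T) := by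
      intro x
      simp only [hvdef]
      exact ((((hf₁.mono hIci).mul continuousOn_const).add
        ((hg₁.mono hIci).mul continuousOn_const)).add (hh₁.mono hIci)).neg
    have step : ∀ n : ℕ, ∃ y : ℝ → ℝ, y t₀ = γ ∧
        ∀ t ∈ Icc t₀ (min T (t₀ + n * δ)),
          HasDerivWithinAt y (v t (y t)) (Icc t₀ (min T (t₀ + n * δ))) t := by
      intro n
      induction n with
      | zero =>
        refine ⟨fun _ => γ, rfl, ?_⟩
        have e : min T (t₀ + (0:ℕ) * δ) = t₀ := by
          push_cast
          rw [zero_mul, add_zero, min_eq_right ht₀T]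
        rw [e]
        intro t ht
        rw [Icc_self, mem_singleton_iff] at ht
        subst ht
        rw [Icc_self]
        exact my_hasDerivWithinAt_singleton _ _ _
      | succ n ih =>
        obtain ⟨y, hy0, hy⟩ := ih
        push_cast
        obtain ⟨s, hsdef⟩ : ∃ s : ℝ, s = min T (t₀ + (n:ℝ) * δ) := ⟨_, rfl⟩
        obtain ⟨s', hs'def⟩ : ∃ s' : ℝ, s' = min T (t₀ + ((n:ℝ) + 1) * δ) := ⟨_, rfl⟩
        rw [← hsdef] at hy
        rw [← hs'def]
        have hnd : (0:ℝ) ≤ (n:ℝ) * δ := mul_nonneg (Nat.cast_nonneg n) hδpos.le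
        have hrng : ((n:ℝ) + 1) * δ = (n:ℝ) * δ + δ := by ring
        have ht₀s : t₀ ≤ s := by rw [hsdef]; exact le_min ht₀T (by linarith)
        have hss' : s ≤ s' := by
          rw [hsdef, hs'def]
          exact min_le_min le_rfl (by linarith [hδpos.le])
        have hs'T : s' ≤ T := by rw [hs'def]; exact min_le_left _ _
        have hsT : s ≤ T := by rw [hsdef]; exact min_le_left _ _
        by_cases hcase : T ≤ t₀ + (n:ℝ) * δ
        · have e : s' = s := by
            rw [hsdef, hs'def, min_eq_left hcase,
              min_eq_left (by linarith [hδpos.le] : T ≤ t₀ + ((n:ℝ) + 1) * δ)]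
          rw [e]
          exact ⟨y, hy0, hy⟩
        · push_neg at hcase
          have hes : s = t₀ + (n:ℝ) * δ := by rw [hsdef]; exact min_eq_right hcase.le
          have hsI : s ∈ I := hIsub hT ⟨ht₀s, hsT⟩
          have hcomp := comp s hsI y hy0 hy
          have hys : |y s| ≤ R₀ := hbdd y s ⟨ht₀s, hsT⟩
            (hcomp s ⟨ht₀s, le_rfl⟩).1 (hcomp s ⟨ht₀s, le_rfl⟩).2
          have hpl : IsPicardLindelof v (tmin := s) (tmax := s') ⟨s, le_rfl, hss'⟩ (y s) 1 0
              ⟨C, hC0⟩ K := by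
            refine ⟨?_, ?_, ?_, ?_⟩
            · intro t ht'
              rw [NNReal.coe_one]
              exact hlip t ⟨ht₀s.trans ht'.1, ht'.2.trans hs'T⟩ (y s) hys
            · intro x _
              exact (hcont x).mono (fun u hu => ⟨ht₀s.trans hu.1, hu.2.trans hs'T⟩)
            · intro t ht' x hx
              rw [NNReal.coe_one] at hx
              show ‖v t x‖ ≤ C
              rw [Real.norm_eq_abs]
              apply hvbound t ⟨ht₀s.trans ht'.1, ht'.2.trans hs'T⟩
              rw [Metric.mem_closedBall, Real.dist_eq] at hx
              have h := abs_add_le (x - y s) (y s)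
              rw [sub_add_cancel] at h
              linarith
            · have h1 : s' - s ≤ δ := by
                have h2 : s' ≤ t₀ + ((n:ℝ) + 1) * δ := by
                  rw [hs'def]; exact min_le_right _ _
                rw [hes]
                linarith
              have h2 : max (s' - s) (s - s) = s' - s := by
                rw [sub_self]
                exact max_eq_left (by linarith)
              show C * max (s' - s) (s - s) ≤ ((1:NNReal):ℝ) - ((0:NNReal):ℝ)
              rw [NNReal.coe_one, NNReal.coe_zero, sub_zero]
              rw [h2]
              calc C * (s' - s) ≤ C * δ := mul_le_mul_of_nonneg_left h1 hC0
                _ ≤ 1 := by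
                    rw [hδdef, mul_one_div, div_le_one (by linarith)]
                    linarith
          obtain ⟨z, hz0, hz⟩ := hpl.exists_eq_forall_mem_Icc_hasDerivWithinAt₀
          obtain ⟨w, hweq, hwd⟩ := glue_aux ht₀s hss' hy hz hz0
          exact ⟨w, by rw [hweq ⟨le_rfl, ht₀s⟩, hy0], hwd⟩
    obtain ⟨n, hn⟩ := exists_nat_ge ((T - t₀) / δ)
    obtain ⟨y, hy0, hy⟩ := step n
    have e : min T (t₀ + (n:ℝ) * δ) = T := by
      apply min_eq_left
      rw [div_le_iff₀ hδpos] at hn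
      linarith
    rw [e] at hy
    exact ⟨y, hy0, hy⟩
  choose sol hsol0 hsold using master
  have uniq : ∀ T₁ (h₁ : T₁ ∈ I) T₂ (h₂ : T₂ ∈ I) t, t₀ ≤ t → t ≤ T₁ → t ≤ T₂ →
      sol T₁ h₁ t = sol T₂ h₂ t := by
    intro T₁ h₁ T₂ h₂ t hht₀ h₁t h₂t
    set m := min T₁ T₂ with hm
    have hmI : m ∈ I := by
      rcases min_cases T₁ T₂ with ⟨h, _⟩ | ⟨h, _⟩ <;> rw [hm, h] <;> assumption
    have ht₀m : t₀ ≤ m := hco hmI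
    have hy : ∀ s ∈ Icc t₀ m, HasDerivWithinAt (sol T₁ h₁) (v s (sol T₁ h₁ s)) (Icc t₀ m) s :=
      fun s hs => (hsold T₁ h₁ s ⟨hs.1, hs.2.trans (min_le_left _ _)⟩).mono
        (Icc_subset_Icc_right (min_le_left _ _))
    have hz : ∀ s ∈ Icc t₀ m, HasDerivWithinAt (sol T₂ h₂) (v s (sol T₂ h₂ s)) (Icc t₀ m) s :=
      fun s hs => (hsold T₂ h₂ s ⟨hs.1, hs.2.trans (min_le_right _ _)⟩).mono
        (Icc_subset_Icc_right (min_le_right _ _))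
    have hyc : ContinuousOn (sol T₁ h₁) (Icc t₀ m) := fun s hs => (hy s hs).continuousWithinAt
    have hzc : ContinuousOn (sol T₂ h₂) (Icc t₀ m) := fun s hs => (hz s hs).continuousWithinAt
    obtain ⟨Ry, hRy⟩ := isCompact_Icc.exists_bound_of_continuousOn hyc
    obtain ⟨Rz, hRz⟩ := isCompact_Icc.exists_bound_of_continuousOn hzc
    set R := max Ry Rz with hR
    have hIci : Icc t₀ m ⊆ Ici t₀ := fun x hx => hx.1
    obtain ⟨Cf, hCf⟩ := isCompact_Icc.exists_bound_of_continuousOn (hf₁.mono hIci)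
    obtain ⟨Cg, hCg⟩ := isCompact_Icc.exists_bound_of_continuousOn (hg₁.mono hIci)
    set K := (Cf * (2 * R) + Cg).toNNReal with hK
    set sset : ℝ → Set ℝ := fun s => if s ∈ Icc t₀ m then Metric.closedBall 0 R else ∅
      with hsset
    have hlip : ∀ s, LipschitzOnWith K (v s) (sset s) := by
      intro s
      by_cases hs : s ∈ Icc t₀ m
      · simp only [hsset, if_pos hs]
        apply LipschitzOnWith.of_dist_le_mul
        intro x hx x' hx'
        rw [mem_closedBall_zero_iff, Real.norm_eq_abs] at hx hx'
        rw [Real.dist_eq, Real.dist_eq]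
        have e : v s x - v s x' = -((f₁ s * (x + x') + g₁ s) * (x - x')) := by
          simp only [hvdef]; ring
        rw [e, abs_neg, abs_mul]
        have hf := hCf s hs
        have hg := hCg s hs
        rw [Real.norm_eq_abs] at hf hg
        have h2 : |f₁ s * (x + x') + g₁ s| ≤ Cf * (2 * R) + Cg := by
          calc |f₁ s * (x + x') + g₁ s| ≤ |f₁ s * (x + x')| + |g₁ s| := abs_add_le _ _
          _ = |f₁ s| * |x + x'| + |g₁ s| := by rw [abs_mul]
          _ ≤ Cf * (2 * R) + Cg := by
              have h3 : |x + x'| ≤ 2 * R := (abs_add_le x x').trans (by linarith)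
              have h4 : (0:ℝ) ≤ |f₁ s| := abs_nonneg _
              nlinarith [abs_nonneg (x + x')]
        have hKge : Cf * (2 * R) + Cg ≤ (K : ℝ) := Real.le_coe_toNNReal _
        nlinarith [abs_nonneg (x - x')]
      · simp only [hsset, if_neg hs]
        exact lipschitzOnWith_empty _ _
    have hnhds : ∀ s ∈ Ico t₀ m, Icc t₀ m ∈ nhdsWithin s (Ici s) := by
      intro s hs
      exact Filter.mem_of_superset (Filter.inter_mem self_mem_nhdsWithin
        (mem_nhdsWithin_of_mem_nhds (Iio_mem_nhds hs.2)))
        (fun x hx => ⟨hs.1.trans (mem_Ici.1 hx.1), (mem_Iio.1 hx.2).le⟩)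
    have hy' : ∀ s ∈ Ico t₀ m, HasDerivWithinAt (sol T₁ h₁)
        (v s (sol T₁ h₁ s)) (Ici s) s := fun s hs =>
      (hy s (Ico_subset_Icc_self hs)).mono_of_mem_nhdsWithin (hnhds s hs)
    have hz' : ∀ s ∈ Ico t₀ m, HasDerivWithinAt (sol T₂ h₂)
        (v s (sol T₂ h₂ s)) (Ici s) s := fun s hs =>
      (hz s (Ico_subset_Icc_self hs)).mono_of_mem_nhdsWithin (hnhds s hs)
    have hys : ∀ s ∈ Ico t₀ m, sol T₁ h₁ s ∈ sset s := by
      intro s hs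
      simp only [hsset, if_pos (Ico_subset_Icc_self hs)]
      rw [mem_closedBall_zero_iff]
      exact (hRy s (Ico_subset_Icc_self hs)).trans (le_max_left _ _)
    have hzs : ∀ s ∈ Ico t₀ m, sol T₂ h₂ s ∈ sset s := by
      intro s hs
      simp only [hsset, if_pos (Ico_subset_Icc_self hs)]
      rw [mem_closedBall_zero_iff]
      exact (hRz s (Ico_subset_Icc_self hs)).trans (le_max_right _ _)
    have := ODE_solution_unique_of_mem_Icc_right (fun s _ => hlip s) hyc hy' hys hzc hz' hzs
      (by rw [hsol0, hsol0])
    exact this ⟨hht₀, le_min h₁t h₂t⟩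
  have hnext : ∀ t ∈ I, ∃ s, s ∈ I ∧ t < s := by
    intro t ht
    obtain ⟨s, hs1, hs2⟩ := EReal.exists_between_coe_real (hlt ht)
    refine ⟨s, ?_, EReal.coe_lt_coe_iff.1 hs1⟩
    rw [hI]
    exact ⟨(hco ht).trans (EReal.coe_lt_coe_iff.1 hs1).le, hs2⟩
  choose S hSI hSlt using hnext
  refine ⟨fun t => if h : t ∈ I then sol (S t h) (hSI t h) t else γ, ?_, ?_, ?_⟩
  · set y₁ : ℝ → ℝ := fun t => if h : t ∈ I then sol (S t h) (hSI t h) t else γ with hy₁def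
    have hy₁eq : ∀ t (h : t ∈ I), y₁ t = sol (S t h) (hSI t h) t := fun t h => dif_pos h
    intro t ht
    have hEq : EqOn y₁ (sol (S t ht) (hSI t ht)) (I ∩ Iic (S t ht)) := by
      intro t' ht'
      rw [hy₁eq t' ht'.1]
      exact uniq (S t' ht'.1) (hSI t' ht'.1) (S t ht) (hSI t ht) t' (hco ht'.1)
        (hSlt t' ht'.1).le ht'.2
    have htm : t ∈ I ∩ Iic (S t ht) := ⟨ht, (hSlt t ht).le⟩
    have h1 : HasDerivWithinAt (sol (S t ht) (hSI t ht))
        (v t (sol (S t ht) (hSI t ht) t)) (I ∩ Iic (S t ht)) t :=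
      (hsold (S t ht) (hSI t ht) t ⟨hco ht, (hSlt t ht).le⟩).mono
        (fun x hx => ⟨hco hx.1, hx.2⟩)
    have h2 : HasDerivWithinAt y₁ (v t (sol (S t ht) (hSI t ht) t))
        (I ∩ Iic (S t ht)) t := h1.congr hEq (hEq htm)
    have h3 : I ∩ Iic (S t ht) ∈ nhdsWithin t I :=
      Filter.mem_of_superset (Filter.inter_mem self_mem_nhdsWithin
        (mem_nhdsWithin_of_mem_nhds (Iio_mem_nhds (hSlt t ht))))
        (fun x hx => ⟨hx.1, (mem_Iio.1 hx.2).le⟩)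
    have h4 := h2.mono_of_mem_nhdsWithin h3
    rw [← hEq htm] at h4
    exact h4
  · have h0 := hsol0 (S t₀ ht₀I) (hSI t₀ ht₀I)
    simp only [dif_pos ht₀I, h0, le_refl]
  · intro t ht
    simp only [dif_pos ht]
    exact (comp (S t ht) (hSI t ht) _ (hsol0 _ _) (hsold _ _) t
      ⟨hco ht, (hSlt t ht).le⟩).1
end

section
/- Let $\varepsilon \ge 0$ and $\beta \in \mathbb{R}$. Then for every $\alpha, \beta_0 \in \mathbb{R}$ the van der Pol equation with parametric excitation $\phi'' + \varepsilon(\phi^2 - 1)\phi' + (1 + \beta\cos t)\phi = 0$ has a solution $\phi$ on the whole half-line $[t_0, +\infty)$ with $\phi(t_0) = \alpha$ and $\phi'(t_0) = \beta_0$; equivalently, the system $\phi' = \psi$, $\psi' = -(1 + \beta\cos t)\phi - \varepsilon(\phi^2 - 1)\psi$ is globally solvable for all initial data at $t_0$. -/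
open Set

variable {E : Type*} [NormedAddCommGroup E] [NormedSpace ℝ E]

lemma hasDerivWithinAt_singleton' (f : ℝ → E) (d : E) (x : ℝ) :
    HasDerivWithinAt f d {x} x := by
  rw [hasDerivWithinAt_iff_hasFDerivWithinAt]
  simp [HasFDerivWithinAt, nhdsWithin_singleton, hasFDerivAtFilter_iff_isLittleO,
    Asymptotics.isLittleO_pure]

/-- Glue local solutions on intervals of uniform length `δ` into a global solution on `Ici t₀`. -/
theorem glue_ode_solutions (v : ℝ → E → E) (δ : ℝ) (hδ : 0 < δ)
    (hyp : ∀ t₁ : ℝ, ∀ x₁ : E, ∃ f : ℝ → E, f t₁ = x₁ ∧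
      ∀ t ∈ Icc t₁ (t₁ + δ), HasDerivWithinAt f (v t (f t)) (Icc t₁ (t₁ + δ)) t)
    (t₀ : ℝ) (x₀ : E) :
    ∃ f : ℝ → E, f t₀ = x₀ ∧ ∀ t ∈ Ici t₀, HasDerivWithinAt f (v t (f t)) (Ici t₀) t := by
  classical
  let T : ℕ → ℝ := fun n => t₀ + n * δ
  have hT0 : T 0 = t₀ := by simp [T]
  have hTmono : ∀ n, T n < T (n + 1) := by
    intro n; simp only [T]; push_cast; nlinarith
  have hTle : ∀ n, t₀ ≤ T n := by
    intro n; simp only [T]; nlinarith [n.cast_nonneg (α := ℝ)]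
  let F : ℕ → (ℝ → E) := fun n => Nat.rec (fun _ => x₀)
    (fun n Fn => fun t => if t ≤ T n then Fn t
      else Classical.choose (hyp (T n) (Fn (T n))) t) n
  have hFsucc : ∀ n t, F (n + 1) t = if t ≤ T n then F n t
      else Classical.choose (hyp (T n) (F n (T n))) t := fun n t => rfl
  have key : ∀ n, F n t₀ = x₀ ∧ ∀ t ∈ Icc t₀ (T n),
      HasDerivWithinAt (F n) (v t (F n t)) (Icc t₀ (T n)) t := by
    intro n
    induction n with
    | zero =>
      refine ⟨rfl, fun t ht => ?_⟩
      rw [hT0] at ht ⊢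
      obtain rfl : t₀ = t := le_antisymm ht.1 ht.2
      rw [Icc_self]
      exact hasDerivWithinAt_singleton' _ _ _
    | succ n ih =>
      obtain ⟨ih0, ihd⟩ := ih
      obtain ⟨hg0, hgd⟩ := Classical.choose_spec (hyp (T n) (F n (T n)))
      have hTn1 : T n + δ = T (n + 1) := by simp only [T]; push_cast; ring
      have hagree1 : EqOn (F (n + 1)) (F n) (Icc t₀ (T n)) := fun t ht => by
        rw [hFsucc, if_pos ht.2]
      have hagree2 : EqOn (F (n + 1)) (Classical.choose (hyp (T n) (F n (T n))))
          (Icc (T n) (T n + δ)) := by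
        intro t ht
        rw [hFsucc]
        rcases lt_or_ge (T n) t with h | h
        · rw [if_neg (not_le.mpr h)]
        · obtain rfl : t = T n := le_antisymm h ht.1
          rw [if_pos le_rfl]; exact hg0.symm
      refine ⟨by rw [hFsucc, if_pos (hTle n), ih0], ?_⟩
      have hIccU : Icc t₀ (T n) ∪ Icc (T n) (T n + δ) = Icc t₀ (T (n + 1)) := by
        rw [hTn1]; exact Icc_union_Icc_eq_Icc (hTle n) (hTmono n).le
      intro t ht
      have ht2 : t ≤ T n + δ := by rw [hTn1]; exact ht.2
      rcases lt_trichotomy t (T n) with h | h | h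
      · have ht' : t ∈ Icc t₀ (T n) := ⟨ht.1, h.le⟩
        have h1 : HasDerivWithinAt (F (n + 1)) (v t (F (n + 1) t)) (Icc t₀ (T n)) t := by
          rw [hagree1 ht']
          exact (ihd t ht').congr (fun s hs => hagree1 hs) (hagree1 ht')
        refine h1.mono_of_mem_nhdsWithin ?_
        rw [mem_nhdsWithin]
        exact ⟨Iio (T n), isOpen_Iio, h, fun s hs => ⟨hs.2.1, hs.1.le⟩⟩
      · have hmem1 : t ∈ Icc t₀ (T n) := ⟨ht.1, h.le⟩
        have hmem2 : t ∈ Icc (T n) (T n + δ) := ⟨le_of_eq h.symm, ht2⟩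
        have h1 : HasDerivWithinAt (F (n + 1)) (v t (F (n + 1) t)) (Icc t₀ (T n)) t := by
          rw [hagree1 hmem1]
          exact (ihd t hmem1).congr (fun s hs => hagree1 hs) (hagree1 hmem1)
        have h2 : HasDerivWithinAt (F (n + 1)) (v t (F (n + 1) t)) (Icc (T n) (T n + δ)) t := by
          rw [hagree2 hmem2]
          exact (hgd t hmem2).congr (fun s hs => hagree2 hs) (hagree2 hmem2)
        have h3 := h1.union h2
        rwa [hIccU] at h3
      · have ht' : t ∈ Icc (T n) (T n + δ) := ⟨h.le, ht2⟩
        have h1 : HasDerivWithinAt (F (n + 1)) (v t (F (n + 1) t)) (Icc (T n) (T n + δ)) t := by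
          rw [hagree2 ht']
          exact (hgd t ht').congr (fun s hs => hagree2 hs) (hagree2 ht')
        refine h1.mono_of_mem_nhdsWithin ?_
        rw [mem_nhdsWithin]
        refine ⟨Ioi (T n), isOpen_Ioi, h, fun s hs => ⟨hs.1.le, ?_⟩⟩
        have := hs.2.2
        rw [← hTn1] at this
        exact this
  have compat : ∀ m n, n ≤ m → ∀ t ≤ T n, F m t = F n t := by
    intro m
    induction m with
    | zero => intro n hn t _; obtain rfl := Nat.le_zero.mp hn; rfl
    | succ m ih =>
      intro n hn t ht
      rcases Nat.eq_or_lt_of_le hn with rfl | hlt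
      · rfl
      · have hnm : n ≤ m := Nat.lt_succ_iff.mp hlt
        have hTnm : T n ≤ T m := by
          simp only [T]
          have : (n : ℝ) ≤ m := Nat.cast_le.mpr hnm
          nlinarith
        rw [hFsucc, if_pos (ht.trans hTnm), ih n hnm t ht]
  let N : ℝ → ℕ := fun t => ⌈(t - t₀) / δ⌉₊ + 1
  have hN : ∀ t, t₀ ≤ t → t < T (N t) := by
    intro t ht
    have h1 : (t - t₀) / δ ≤ ⌈(t - t₀) / δ⌉₊ := Nat.le_ceil _
    have h2 : t - t₀ ≤ (⌈(t - t₀) / δ⌉₊ : ℝ) * δ := (div_le_iff₀ hδ).mp h1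
    simp only [T, N]
    push_cast
    nlinarith
  refine ⟨fun t => F (N t) t, ?_, ?_⟩
  · show F (N t₀) t₀ = x₀
    rw [compat (N t₀) 0 (Nat.zero_le _) t₀ (le_of_eq hT0.symm), (key 0).1]
  · intro t ht
    have htN := hN t ht
    have hagree : ∀ s ∈ Icc t₀ (T (N t)), F (N s) s = F (N t) s := by
      intro s hs
      rcases le_total (N s) (N t) with h | h
      · have hsN : s ≤ T (N s) := (hN s hs.1).le
        exact (compat (N t) (N s) h s hsN).symm
      · exact compat (N s) (N t) h s hs.2
    have hmem : t ∈ Icc t₀ (T (N t)) := ⟨ht, htN.le⟩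
    have h1 := ((key (N t)).2 t hmem).congr (fun s hs => hagree s hs) (hagree t hmem)
    show HasDerivWithinAt (fun s => F (N s) s) (v t (F (N t) t)) (Ici t₀) t
    refine (hagree t hmem) ▸ h1.mono_of_mem_nhdsWithin ?_
    rw [mem_nhdsWithin]
    exact ⟨Iio (T (N t)), isOpen_Iio, htN, fun s hs => ⟨hs.2, hs.1.le⟩⟩

variable {E : Type*} [NormedAddCommGroup E] [NormedSpace ℝ E] [CompleteSpace E]

theorem global_of_lipschitz (v : ℝ → E → E) (L : NNReal)
    (hL : ∀ t, LipschitzWith L (v t))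
    (hc : ∀ x, Continuous fun t => v t x) (t₀ : ℝ) (x₀ : E) :
    ∃ f : ℝ → E, f t₀ = x₀ ∧ ∀ t ∈ Ici t₀, HasDerivWithinAt f (v t (f t)) (Ici t₀) t := by
  set L' : ℝ := (L : ℝ) + 1 with hL'
  have hL'pos : 0 < L' := by positivity
  set δ : ℝ := 1 / (2 * L') with hδdef
  have hδ : 0 < δ := by positivity
  apply glue_ode_solutions v δ hδ _ t₀ x₀
  intro t₁ x₁
  -- bound of ‖v t x₁‖ on the compact interval
  obtain ⟨C₁, hC₁⟩ := (isCompact_Icc (a := t₁) (b := t₁ + δ)).exists_bound_of_continuousOn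
    ((hc x₁).continuousOn (s := Icc t₁ (t₁ + δ)))
  set C₀ : ℝ := max C₁ 0 with hC₀def
  have hC₀ : 0 ≤ C₀ := le_max_right _ _
  have hC₀b : ∀ t ∈ Icc t₁ (t₁ + δ), ‖v t x₁‖ ≤ C₀ := fun t ht =>
    (hC₁ t ht).trans (le_max_left _ _)
  set R : ℝ := C₀ / L' with hRdef
  have hR : 0 ≤ R := div_nonneg hC₀ hL'pos.le
  have hpl : IsPicardLindelof v (tmin := t₁) (tmax := t₁ + δ) ⟨t₁, ⟨le_rfl, by linarith⟩⟩ x₁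
      ⟨R, hR⟩ 0 ⟨2 * C₀, by positivity⟩ L := by
    constructor
    · exact fun t _ => (hL t).lipschitzOnWith
    · exact fun x _ => (hc x).continuousOn
    · intro t ht x hx
      show ‖v t x‖ ≤ 2 * C₀
      have h1 : ‖v t x - v t x₁‖ ≤ (L : ℝ) * ‖x - x₁‖ := by
        have := (hL t).dist_le_mul x x₁
        rwa [dist_eq_norm, dist_eq_norm] at this
      have h2 : ‖x - x₁‖ ≤ R := by
        have := mem_closedBall_iff_norm.mp hx
        exact this
      have h3 : (L : ℝ) * ‖x - x₁‖ ≤ L' * R := by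
        apply mul_le_mul _ h2 (norm_nonneg _) hL'pos.le
        simp [hL']
      have h4 : L' * R = C₀ := by
        rw [hRdef]; field_simp
      calc ‖v t x‖ ≤ ‖v t x₁‖ + ‖v t x - v t x₁‖ := by
            simpa using norm_add_le (v t x₁) (v t x - v t x₁)
        _ ≤ C₀ + C₀ := by
            have := hC₀b t ht
            nlinarith
        _ = 2 * C₀ := by ring
    · rw [NNReal.coe_zero, sub_zero]
      show 2 * C₀ * max (t₁ + δ - t₁) (t₁ - t₁) ≤ R
      have : max (t₁ + δ - t₁) (t₁ - t₁) = δ := by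
        rw [add_sub_cancel_left, sub_self]
        exact max_eq_left hδ.le
      rw [this]
      refine le_of_eq ?_
      rw [hδdef, hRdef]
      field_simp
  obtain ⟨f, hf0, hfd⟩ := hpl.exists_eq_forall_mem_Icc_hasDerivWithinAt₀
  exact ⟨f, hf0, hfd⟩


noncomputable def clampR (M y : ℝ) : ℝ := max (-M) (min y M)

lemma clampR_lipschitz (M : ℝ) : LipschitzWith 1 (clampR M) :=
  (LipschitzWith.id.min_const M).const_max (-M)

lemma clampR_dist (M a b : ℝ) : |clampR M a - clampR M b| ≤ |a - b| := by
  have := (clampR_lipschitz M).dist_le_mul a b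
  rwa [Real.dist_eq, Real.dist_eq, NNReal.coe_one, one_mul] at this

lemma clampR_abs_le {M : ℝ} (hM : 0 ≤ M) (y : ℝ) : |clampR M y| ≤ M := by
  rw [abs_le]
  exact ⟨le_max_left _ _, max_le (by linarith) (min_le_right _ _)⟩

lemma clampR_eq {M y : ℝ} (h : |y| ≤ M) : clampR M y = y := by
  obtain ⟨h1, h2⟩ := abs_le.mp h
  unfold clampR
  rw [min_eq_left h2, max_eq_right h1]

lemma clampR_mul_nonneg {M : ℝ} (hM : 0 ≤ M) (y : ℝ) : 0 ≤ y * clampR M y := by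
  unfold clampR
  rcases le_total 0 y with h | h
  · have h1 : 0 ≤ min y M := le_min h hM
    rw [max_eq_right (by linarith)]
    positivity
  · rw [min_eq_left (h.trans hM)]
    rcases le_total (-M) y with h2 | h2
    · rw [max_eq_right h2]; nlinarith
    · rw [max_eq_left h2]; nlinarith

lemma clampR_abs_le_abs {M : ℝ} (hM : 0 ≤ M) (y : ℝ) : |clampR M y| ≤ |y| := by
  unfold clampR
  rcases le_total 0 y with h | h
  · have h1 : 0 ≤ min y M := le_min h hM
    rw [max_eq_right (by linarith), abs_of_nonneg h1, abs_of_nonneg h]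
    exact min_le_left _ _
  · rw [min_eq_left (h.trans hM)]
    rcases le_total (-M) y with h2 | h2
    · rw [max_eq_right h2]
    · rw [max_eq_left h2, abs_of_nonpos (by linarith), abs_of_nonpos h]
      linarith

lemma clampR_mul_le_sq {M : ℝ} (hM : 0 ≤ M) (y : ℝ) : y * clampR M y ≤ y ^ 2 := by
  have h1 := clampR_mul_nonneg hM y
  have h2 := clampR_abs_le_abs hM y
  calc y * clampR M y = |y * clampR M y| := (abs_of_nonneg h1).symm
    _ = |y| * |clampR M y| := abs_mul _ _
    _ ≤ |y| * |y| := by nlinarith [abs_nonneg y]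
    _ = y ^ 2 := by rw [← abs_mul, ← sq, abs_sq]

/-- The truncated van der Pol vector field. -/
noncomputable def vdpF (ε β M : ℝ) (t : ℝ) (p : ℝ × ℝ) : ℝ × ℝ :=
  (p.2, -(1 + β * Real.cos t) * p.1 - ε * ((clampR M p.1) ^ 2 - 1) * clampR M p.2)

lemma vdpF_cont (ε β M : ℝ) (p : ℝ × ℝ) : Continuous fun t => vdpF ε β M t p := by
  unfold vdpF
  fun_prop

set_option maxHeartbeats 1000000 in
lemma vdpF_lip {ε M : ℝ} (β : ℝ) (hε : 0 ≤ ε) (hM : 1 ≤ M) (t : ℝ) :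
    LipschitzWith (Real.toNNReal (1 + |β| + ε * (3 * M ^ 2 + 1))) (vdpF ε β M t) := by
  have hM0 : (0:ℝ) ≤ M := by linarith
  set Lr : ℝ := 1 + |β| + ε * (3 * M ^ 2 + 1) with hLr
  have hLrpos : 1 ≤ Lr := by nlinarith [abs_nonneg β]
  apply LipschitzWith.of_dist_le_mul
  intro p q
  have hcoe : ((Real.toNNReal Lr : NNReal) : ℝ) = Lr := Real.coe_toNNReal _ (by linarith)
  rw [Prod.dist_eq, hcoe]
  set D := dist p q with hD
  have hD0 : 0 ≤ D := dist_nonneg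
  have hac : |p.1 - q.1| ≤ D := by
    rw [← Real.dist_eq]; exact (le_max_left _ _).trans_eq (Prod.dist_eq (x := p) (y := q)).symm
  have hbd : |p.2 - q.2| ≤ D := by
    rw [← Real.dist_eq]; exact (le_max_right _ _).trans_eq (Prod.dist_eq (x := p) (y := q)).symm
  have hac' : |p.1 - q.1| ≤ D := hac
  clear_value D
  apply max_le
  · show |p.2 - q.2| ≤ Lr * D
    nlinarith
  · show |(vdpF ε β M t p).2 - (vdpF ε β M t q).2| ≤ Lr * D
    have heq : (vdpF ε β M t p).2 - (vdpF ε β M t q).2 =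
        -(1 + β * Real.cos t) * (p.1 - q.1)
          - ε * ((clampR M p.1 ^ 2 - clampR M q.1 ^ 2) * clampR M p.2
            + (clampR M q.1 ^ 2 - 1) * (clampR M p.2 - clampR M q.2)) := by
      simp only [vdpF]
      ring
    rw [heq]
    have hA : |(-(1 + β * Real.cos t))| ≤ 1 + |β| := by
      have h1 : |β * Real.cos t| ≤ |β| := by
        rw [abs_mul]
        nlinarith [Real.abs_cos_le_one t, abs_nonneg β]
      calc |(-(1 + β * Real.cos t))| = |1 + β * Real.cos t| := abs_neg _
        _ ≤ |1| + |β * Real.cos t| := abs_add_le _ _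
        _ ≤ 1 + |β| := by rw [abs_one]; linarith
    set A := -(1 + β * Real.cos t) with hAdef
    clear_value A
    have h1 : |clampR M p.1 - clampR M q.1| ≤ |p.1 - q.1| := clampR_dist M _ _
    have h2 : |clampR M p.2 - clampR M q.2| ≤ |p.2 - q.2| := clampR_dist M _ _
    have h3 : |clampR M p.1| ≤ M := clampR_abs_le hM0 _
    have h4 : |clampR M q.1| ≤ M := clampR_abs_le hM0 _
    have h5 : |clampR M p.2| ≤ M := clampR_abs_le hM0 _
    set u := p.1 - q.1 with hu
    set w := p.2 - q.2 with hw
    set cpa := clampR M p.1 with hcpa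
    set cpb := clampR M p.2 with hcpb
    set cqa := clampR M q.1 with hcqa
    set cqd := clampR M q.2 with hcqd
    clear_value u w cpa cpb cqa cqd
    clear heq hAdef hu hw hcpa hcpb hcqa hcqd hcoe hD
    have hwD : |w| ≤ D := hbd
    have hdiff : |cpa ^ 2 - cqa ^ 2| ≤ 2 * M * D := by
      have e0 : cpa ^ 2 - cqa ^ 2 = (cpa + cqa) * (cpa - cqa) := by ring
      rw [e0, abs_mul]
      have e1 : |cpa + cqa| ≤ 2 * M := (abs_add_le _ _).trans (by linarith)
      have e2 : |cpa - cqa| ≤ D := h1.trans hac'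
      exact mul_le_mul e1 e2 (abs_nonneg _) (by linarith)
    have hone : |cqa ^ 2 - 1| ≤ M ^ 2 := by
      have h4' := abs_le.mp h4
      have hc2 : cqa ^ 2 ≤ M ^ 2 := sq_le_sq' h4'.1 h4'.2
      have hM2 : 1 ≤ M ^ 2 := by nlinarith
      rw [abs_le]
      constructor <;> nlinarith [sq_nonneg cqa]
    have hinner : |(cpa ^ 2 - cqa ^ 2) * cpb + (cqa ^ 2 - 1) * (cpb - cqd)|
        ≤ 2 * M * D * M + M ^ 2 * D := by
      refine (abs_add_le _ _).trans ?_
      rw [abs_mul, abs_mul]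
      have e3 : |cpa ^ 2 - cqa ^ 2| * |cpb| ≤ 2 * M * D * M :=
        mul_le_mul hdiff h5 (abs_nonneg _) (by positivity)
      have e4 : |cqa ^ 2 - 1| * |cpb - cqd| ≤ M ^ 2 * D :=
        mul_le_mul hone (h2.trans hwD) (abs_nonneg _) (sq_nonneg M)
      linarith
    have tri : |A * u - ε * ((cpa ^ 2 - cqa ^ 2) * cpb + (cqa ^ 2 - 1) * (cpb - cqd))|
        ≤ |A * u| + |ε * ((cpa ^ 2 - cqa ^ 2) * cpb + (cqa ^ 2 - 1) * (cpb - cqd))| := by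
      rw [sub_eq_add_neg]
      exact (abs_add_le _ _).trans (by rw [abs_neg])
    refine tri.trans ?_
    rw [abs_mul, abs_mul, abs_of_nonneg hε]
    have e5 : |A| * |u| ≤ (1 + |β|) * D :=
      mul_le_mul hA hac' (abs_nonneg _) (by positivity)
    have e6 : ε * |(cpa ^ 2 - cqa ^ 2) * cpb + (cqa ^ 2 - 1) * (cpb - cqd)|
        ≤ ε * (2 * M * D * M + M ^ 2 * D) := by
      exact mul_le_mul_of_nonneg_left hinner hε
    have e7 : (1 + |β|) * D + ε * (2 * M * D * M + M ^ 2 * D) ≤ Lr * D := by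
      rw [hLr]
      nlinarith [mul_nonneg hε hD0]
    linarith

lemma vdp_energy {ε β M t₀ α β₀ : ℝ} (hε : 0 ≤ ε) (hM : 0 ≤ M)
    {f : ℝ → ℝ × ℝ} (hf0 : f t₀ = (α, β₀))
    (hfd : ∀ t ∈ Ici t₀, HasDerivWithinAt f (vdpF ε β M t (f t)) (Ici t₀) t)
    {b : ℝ} : ∀ t ∈ Icc t₀ b,
      (f t).1 ^ 2 + (f t).2 ^ 2 ≤ (α ^ 2 + β₀ ^ 2) * Real.exp ((|β| + 2 * ε) * (t - t₀)) := by
  set K : ℝ := |β| + 2 * ε with hK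
  set e : ℝ → ℝ := fun t => (f t).1 ^ 2 + (f t).2 ^ 2 with he
  set e' : ℝ → ℝ := fun t =>
    2 * (f t).1 * (vdpF ε β M t (f t)).1 + 2 * (f t).2 * (vdpF ε β M t (f t)).2 with he'
  have hcont : ContinuousOn f (Icc t₀ b) := fun t ht =>
    ((hfd t ht.1).continuousWithinAt).mono Icc_subset_Ici_self
  have hder : ∀ t ∈ Ico t₀ b, HasDerivWithinAt e (e' t) (Ici t) t := by
    intro t ht
    have h : HasDerivWithinAt f (vdpF ε β M t (f t)) (Ici t) t :=
      (hfd t (mem_Ici.mpr ht.1)).mono (Ici_subset_Ici.mpr ht.1)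
    have h1 : HasDerivWithinAt (fun u => (f u).1) (vdpF ε β M t (f t)).1 (Ici t) t :=
      (hasFDerivAt_fst (p := f t)).comp_hasDerivWithinAt t h
    have h2 : HasDerivWithinAt (fun u => (f u).2) (vdpF ε β M t (f t)).2 (Ici t) t :=
      (hasFDerivAt_snd (p := f t)).comp_hasDerivWithinAt t h
    have h3 : HasDerivWithinAt (fun y : ℝ => (f y).1 * (f y).1 + (f y).2 * (f y).2) _ (Ici t) t :=
      (h1.mul h1).add (h2.mul h2)
    have hfun : (fun y : ℝ => (f y).1 * (f y).1 + (f y).2 * (f y).2) = e := by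
      funext u
      simp only [he]
      ring
    rw [hfun] at h3
    have h4 : e' t = (vdpF ε β M t (f t)).1 * (f t).1 + (f t).1 * (vdpF ε β M t (f t)).1 +
        ((vdpF ε β M t (f t)).2 * (f t).2 + (f t).2 * (vdpF ε β M t (f t)).2) := by
      simp only [he']
      ring
    rw [h4]
    exact h3
  have hbound : ∀ t ∈ Ico t₀ b, e' t ≤ K * e t + 0 := by
    intro t ht
    simp only [e', he, vdpF]
    set x := (f t).1
    set y := (f t).2
    have hc1 : 0 ≤ y * clampR M y := clampR_mul_nonneg hM y
    have hc2 : y * clampR M y ≤ y ^ 2 := clampR_mul_le_sq hM y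
    have hc3 : 0 ≤ (clampR M x) ^ 2 := sq_nonneg _
    have hcos : |β * Real.cos t| ≤ |β| := by
      rw [abs_mul]
      nlinarith [Real.abs_cos_le_one t, abs_nonneg β]
    obtain ⟨hcos1, hcos2⟩ := abs_le.mp hcos
    -- goal: 2xy + 2y(-(1+βc)x - ε((cx²-1)cy)) ≤ K(x²+y²)
    have key1 : -(2 * (β * Real.cos t) * (x * y)) ≤ |β| * (x ^ 2 + y ^ 2) := by
      nlinarith [mul_nonneg (by linarith : (0:ℝ) ≤ |β| + β * Real.cos t) (sq_nonneg (x + y)),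
        mul_nonneg (by linarith : (0:ℝ) ≤ |β| - β * Real.cos t) (sq_nonneg (x - y))]
    have key2 : -(2 * ε * ((clampR M x) ^ 2 * (y * clampR M y))) ≤ 0 := by
      have := mul_nonneg hc3 hc1
      nlinarith
    have key3 : 2 * ε * (y * clampR M y) ≤ 2 * ε * y ^ 2 := by nlinarith
    have expand : 2 * x * y + 2 * y * (-(1 + β * Real.cos t) * x
          - ε * ((clampR M x) ^ 2 - 1) * clampR M y)
        = -(2 * (β * Real.cos t) * (x * y))
          + (-(2 * ε * ((clampR M x) ^ 2 * (y * clampR M y)))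
            + 2 * ε * (y * clampR M y)) := by ring
    rw [expand, hK]
    nlinarith
  have hstart : e t₀ ≤ α ^ 2 + β₀ ^ 2 := by
    simp only [he, hf0]
    exact le_rfl
  have := le_gronwallBound_of_liminf_deriv_right_le
    (f := e) (f' := e') (δ := α ^ 2 + β₀ ^ 2) (K := K) (ε := 0) (a := t₀) (b := b)
    (by
      have : ContinuousOn e (Icc t₀ b) := by
        apply ContinuousOn.add
        · exact ((continuous_fst.comp_continuousOn hcont)).pow 2
        · exact ((continuous_snd.comp_continuousOn hcont)).pow 2
      exact this)
    (fun x hx r hr => (hder x hx).liminf_right_slope_le hr)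
    hstart hbound
  intro t ht
  have h := this t ht
  rwa [gronwallBound_ε0] at h

set_option maxHeartbeats 1000000

/-- Global solvability of the van der Pol equation with parametric excitation
`φ'' + ε (φ² - 1) φ' + (1 + β cos t) φ = 0` (with `ε ≥ 0`): for all initial data
`φ t₀ = α`, `φ' t₀ = β₀` there is a solution on all of `[t₀, +∞)`, stated via the
equivalent system `φ' = ψ`, `ψ' = -(1 + β cos t) φ - ε (φ² - 1) ψ`. -/
theorem van_der_pol_parametric_global
    (t₀ ε β : ℝ) (hε : 0 ≤ ε) (α β₀ : ℝ) :
    ∃ φ ψ : ℝ → ℝ, φ t₀ = α ∧ ψ t₀ = β₀ ∧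
      ∀ t ∈ Ici t₀,
        HasDerivWithinAt φ (ψ t) (Ici t₀) t ∧
        HasDerivWithinAt ψ
          (-(1 + β * Real.cos t) * φ t - ε * (φ t ^ 2 - 1) * ψ t) (Ici t₀) t := by
  classical
  set K : ℝ := |β| + 2 * ε with hK
  have hK0 : 0 ≤ K := by positivity
  set E₀ : ℝ := α ^ 2 + β₀ ^ 2 with hE₀
  have hE₀0 : 0 ≤ E₀ := by positivity
  set M : ℕ → ℝ := fun n => max 1 (Real.sqrt ((E₀ + 1) * Real.exp (K * n))) with hMdef
  have hM1 : ∀ n, 1 ≤ M n := fun n => le_max_left _ _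
  have hM0 : ∀ n, 0 ≤ M n := fun n => zero_le_one.trans (hM1 n)
  have hMsq : ∀ n : ℕ, (E₀ + 1) * Real.exp (K * n) ≤ (M n) ^ 2 := by
    intro n
    have h0 : 0 ≤ (E₀ + 1) * Real.exp (K * n) := by positivity
    calc (E₀ + 1) * Real.exp (K * n)
        = (Real.sqrt ((E₀ + 1) * Real.exp (K * n))) ^ 2 := (Real.sq_sqrt h0).symm
      _ ≤ (M n) ^ 2 := pow_le_pow_left₀ (Real.sqrt_nonneg _) (le_max_right _ _) 2
  have hMmono : ∀ m n : ℕ, m ≤ n → M m ≤ M n := by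
    intro m n h
    apply max_le_max le_rfl
    apply Real.sqrt_le_sqrt
    have h1 : Real.exp (K * m) ≤ Real.exp (K * n) :=
      Real.exp_le_exp.mpr (mul_le_mul_of_nonneg_left (Nat.cast_le.mpr h) hK0)
    nlinarith [Real.exp_pos (K * (m : ℝ))]
  have hFn : ∀ n : ℕ, ∃ f : ℝ → ℝ × ℝ, f t₀ = (α, β₀) ∧
      ∀ t ∈ Ici t₀, HasDerivWithinAt f (vdpF ε β (M n) t (f t)) (Ici t₀) t := fun n =>
    global_of_lipschitz _ _ (fun t => vdpF_lip β hε (hM1 n) t)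
      (fun x => vdpF_cont ε β (M n) x) t₀ (α, β₀)
  choose F hF0 hFd using hFn
  have hbound : ∀ n : ℕ, ∀ t ∈ Icc t₀ (t₀ + (n : ℝ)),
      |(F n t).1| ≤ M n ∧ |(F n t).2| ≤ M n := by
    intro n t ht
    have he := vdp_energy hε (hM0 n) (hF0 n) (hFd n) t ht
    have hsq : (F n t).1 ^ 2 + (F n t).2 ^ 2 ≤ (M n) ^ 2 := by
      have hexp : Real.exp (K * (t - t₀)) ≤ Real.exp (K * n) :=
        Real.exp_le_exp.mpr (mul_le_mul_of_nonneg_left (by linarith [ht.1, ht.2]) hK0)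
      have h2 : E₀ * Real.exp (K * (t - t₀)) ≤ (E₀ + 1) * Real.exp (K * n) := by
        nlinarith [Real.exp_pos (K * (t - t₀)), Real.exp_pos (K * (n : ℝ))]
      calc (F n t).1 ^ 2 + (F n t).2 ^ 2 ≤ E₀ * Real.exp (K * (t - t₀)) := he
        _ ≤ (E₀ + 1) * Real.exp (K * n) := h2
        _ ≤ (M n) ^ 2 := hMsq n
    constructor
    · calc |(F n t).1| = Real.sqrt ((F n t).1 ^ 2) := (Real.sqrt_sq_eq_abs _).symm
        _ ≤ Real.sqrt ((M n) ^ 2) := Real.sqrt_le_sqrt (by nlinarith [sq_nonneg (F n t).2])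
        _ = M n := Real.sqrt_sq (hM0 n)
    · calc |(F n t).2| = Real.sqrt ((F n t).2 ^ 2) := (Real.sqrt_sq_eq_abs _).symm
        _ ≤ Real.sqrt ((M n) ^ 2) := Real.sqrt_le_sqrt (by nlinarith [sq_nonneg (F n t).1])
        _ = M n := Real.sqrt_sq (hM0 n)
  set w : ℝ → ℝ × ℝ → ℝ × ℝ := fun t p =>
    (p.2, -(1 + β * Real.cos t) * p.1 - ε * (p.1 ^ 2 - 1) * p.2) with hwdef
  have hfield : ∀ (m : ℝ) (t : ℝ) (p : ℝ × ℝ), |p.1| ≤ m → |p.2| ≤ m →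
      vdpF ε β m t p = w t p := by
    intro m t p h1 h2
    simp only [vdpF, hwdef, clampR_eq h1, clampR_eq h2]
  have hball : ∀ (m : ℝ) (p : ℝ × ℝ), p ∈ Metric.closedBall (0 : ℝ × ℝ) m →
      |p.1| ≤ m ∧ |p.2| ≤ m := by
    intro m p hp
    have := Metric.mem_closedBall.mp hp
    rw [Prod.dist_eq] at this
    have h1 : dist p.1 (0 : ℝ × ℝ).1 ≤ m := le_trans (le_max_left _ _) this
    have h2 : dist p.2 (0 : ℝ × ℝ).2 ≤ m := le_trans (le_max_right _ _) this
    rw [Real.dist_eq, Prod.fst_zero, sub_zero] at h1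
    rw [Real.dist_eq, Prod.snd_zero, sub_zero] at h2
    exact ⟨h1, h2⟩
  have hmem : ∀ (n m : ℕ), n ≤ m → ∀ t ∈ Icc t₀ (t₀ + (n : ℝ)),
      F n t ∈ Metric.closedBall (0 : ℝ × ℝ) (M m) := by
    intro n m hnm t ht
    have hb := hbound n t ht
    rw [Metric.mem_closedBall, Prod.dist_eq]
    apply max_le
    · rw [Real.dist_eq, Prod.fst_zero, sub_zero]; exact hb.1.trans (hMmono n m hnm)
    · rw [Real.dist_eq, Prod.snd_zero, sub_zero]; exact hb.2.trans (hMmono n m hnm)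
  have hcontF : ∀ (n : ℕ) (b : ℝ), ContinuousOn (F n) (Icc t₀ b) := fun n b t ht =>
    ((hFd n t ht.1).continuousWithinAt).mono Icc_subset_Ici_self
  have htrue : ∀ (n k : ℕ), k ≤ n → ∀ t ∈ Ico t₀ (t₀ + (k : ℝ)),
      HasDerivWithinAt (F n) (w t (F n t)) (Ici t) t := by
    intro n k hkn t ht
    have hkn' : (k : ℝ) ≤ n := Nat.cast_le.mpr hkn
    have hb := hbound n t ⟨ht.1, by linarith [ht.2]⟩
    have h := (hFd n t ht.1).mono (Ici_subset_Ici.mpr ht.1)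
    rwa [hfield (M n) t (F n t) hb.1 hb.2] at h
  have huniq : ∀ n m : ℕ, n ≤ m → EqOn (F n) (F m) (Icc t₀ (t₀ + (n : ℝ))) := by
    intro n m hnm
    have hnm' : (n : ℝ) ≤ m := Nat.cast_le.mpr hnm
    have hlip : ∀ t, LipschitzOnWith (Real.toNNReal (1 + |β| + ε * (3 * (M m) ^ 2 + 1))) (w t)
        (Metric.closedBall (0 : ℝ × ℝ) (M m)) := by
      intro t
      apply LipschitzOnWith.of_dist_le_mul
      intro p hp q hq
      obtain ⟨hp1, hp2⟩ := hball (M m) p hp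
      obtain ⟨hq1, hq2⟩ := hball (M m) q hq
      rw [← hfield (M m) t p hp1 hp2, ← hfield (M m) t q hq1 hq2]
      exact (vdpF_lip β hε (hM1 m) t).dist_le_mul p q
    exact ODE_solution_unique_of_mem_Icc_right (fun t _ => hlip t)
      (hcontF n _) (htrue n n le_rfl)
      (fun t ht => hmem n m hnm t ⟨ht.1, ht.2.le⟩)
      (hcontF m _)
      (fun t ht => htrue m m le_rfl t ⟨ht.1, by linarith [ht.2]⟩)
      (fun t ht => hmem m m le_rfl t ⟨ht.1, by linarith [ht.2]⟩)
      (by rw [hF0 n, hF0 m])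
  set N : ℝ → ℕ := fun t => ⌈t - t₀⌉₊ + 1 with hNdef
  have hNlt : ∀ t, t₀ ≤ t → t < t₀ + (N t : ℝ) := by
    intro t ht
    have h1 := Nat.le_ceil (t - t₀)
    simp only [hNdef]
    push_cast
    linarith
  set g : ℝ → ℝ × ℝ := fun t => F (N t) t with hgdef
  have hagree : ∀ n : ℕ, ∀ s ∈ Icc t₀ (t₀ + (n : ℝ)), g s = F n s := by
    intro n s hs
    rcases le_total (N s) n with h | h
    · exact huniq (N s) n h ⟨hs.1, (hNlt s hs.1).le⟩
    · exact (huniq n (N s) h hs).symm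
  have hg0 : g t₀ = (α, β₀) := by
    show F (N t₀) t₀ = (α, β₀)
    exact hF0 _
  refine ⟨fun t => (g t).1, fun t => (g t).2, by show (g t₀).1 = α; rw [hg0], by
    show (g t₀).2 = β₀; rw [hg0], ?_⟩
  intro t ht
  rw [mem_Ici] at ht
  have htn := hNlt t ht
  have htmem : t ∈ Icc t₀ (t₀ + (N t : ℝ)) := ⟨ht, htn.le⟩
  have hb := hbound (N t) t htmem
  have h1 : HasDerivWithinAt (F (N t)) (w t (F (N t) t)) (Ici t₀) t := by
    have h := hFd (N t) t ht
    rwa [hfield (M (N t)) t (F (N t) t) hb.1 hb.2] at h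
  have h2 : HasDerivWithinAt (F (N t)) (w t (F (N t) t)) (Icc t₀ (t₀ + (N t : ℝ))) t :=
    h1.mono Icc_subset_Ici_self
  have h3 : HasDerivWithinAt g (w t (g t)) (Icc t₀ (t₀ + (N t : ℝ))) t := by
    rw [hagree (N t) t htmem]
    exact h2.congr (fun s hs => hagree (N t) s hs) (hagree (N t) t htmem)
  have h4 : HasDerivWithinAt g (w t (g t)) (Ici t₀) t := by
    refine h3.mono_of_mem_nhdsWithin ?_
    rw [mem_nhdsWithin]
    exact ⟨Iio (t₀ + (N t : ℝ)), isOpen_Iio, htn, fun s hs => ⟨hs.2, hs.1.le⟩⟩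
  constructor
  · exact (hasFDerivAt_fst (p := g t)).comp_hasDerivWithinAt t h4
  · exact (hasFDerivAt_snd (p := g t)).comp_hasDerivWithinAt t h4
end

section
/- Let $\varepsilon \ge 0$ and $\Gamma, \omega \in \mathbb{R}$. Then for every $\alpha, \beta_0 \in \mathbb{R}$ the forced van der Pol equation $\phi'' + \varepsilon(\phi^2 - 1)\phi' + \phi = \Gamma\cos(\omega t)$ has a solution $\phi$ on the whole half-line $[t_0, +\infty)$ with $\phi(t_0) = \alpha$ and $\phi'(t_0) = \beta_0$. -/
open Set

namespace VdPaux

noncomputable def v (ε Γ ω : ℝ) (t : ℝ) (p : ℝ × ℝ) : ℝ × ℝ :=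
  (p.2, -p.1 - ε * (p.1 ^ 2 - 1) * p.2 + Γ * Real.cos (ω * t))

lemma cont_v (ε Γ ω : ℝ) (x : ℝ × ℝ) : Continuous fun t => v ε Γ ω t x := by
  unfold v; fun_prop

lemma coord_le {p : ℝ × ℝ} {ρ : ℝ} (hp : p ∈ Metric.closedBall (0 : ℝ × ℝ) ρ) :
    |p.1| ≤ ρ ∧ |p.2| ≤ ρ := by
  rw [Metric.mem_closedBall, dist_zero_right, Prod.norm_def] at hp
  exact ⟨le_trans (le_max_left _ _) hp, le_trans (le_max_right _ _) hp⟩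

lemma lip (ε Γ ω : ℝ) (hε : 0 ≤ ε) {ρ : ℝ} (hρ : 0 ≤ ρ) (t : ℝ) :
    LipschitzOnWith (Real.toNNReal (2 + ε * (3 * ρ ^ 2 + 1))) (v ε Γ ω t)
      (Metric.closedBall (0 : ℝ × ℝ) ρ) := by
  rw [lipschitzOnWith_iff_dist_le_mul]
  intro p hp q hq
  obtain ⟨hp1, hp2⟩ := coord_le hp
  obtain ⟨hq1, hq2⟩ := coord_le hq
  have hco : (Real.toNNReal (2 + ε * (3 * ρ ^ 2 + 1)) : ℝ) = 2 + ε * (3 * ρ ^ 2 + 1) :=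
    Real.coe_toNNReal _ (by positivity)
  rw [hco, Prod.dist_eq, Prod.dist_eq]
  set D := max (dist p.1 q.1) (dist p.2 q.2) with hD
  have hd1 : |p.1 - q.1| ≤ D := le_trans (le_of_eq (Real.dist_eq _ _).symm) (le_max_left _ _)
  have hd2 : |p.2 - q.2| ≤ D := le_trans (le_of_eq (Real.dist_eq _ _).symm) (le_max_right _ _)
  have hD0 : 0 ≤ D := le_trans (abs_nonneg _) hd1
  have e1 : |p.1 ^ 2 - 1| ≤ ρ ^ 2 + 1 := by
    have h3 : p.1 ^ 2 ≤ ρ ^ 2 := by nlinarith [abs_nonneg p.1, sq_abs p.1]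
    calc |p.1 ^ 2 - 1| ≤ |p.1 ^ 2| + |(1:ℝ)| := abs_sub _ _
      _ ≤ ρ ^ 2 + 1 := by rw [abs_of_nonneg (sq_nonneg _), abs_one]; linarith
  have e2 : |p.1 + q.1| ≤ 2 * ρ := by
    calc |p.1 + q.1| ≤ |p.1| + |q.1| := abs_add_le _ _
      _ ≤ 2 * ρ := by linarith
  apply max_le
  · show dist (v ε Γ ω t p).1 (v ε Γ ω t q).1 ≤ _
    simp only [v, Real.dist_eq]
    nlinarith [hd2, hD0, mul_nonneg (mul_nonneg hε (by positivity : (0:ℝ) ≤ 3 * ρ ^ 2 + 1)) hD0]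
  · show dist (v ε Γ ω t p).2 (v ε Γ ω t q).2 ≤ _
    rw [Real.dist_eq]
    have key : (v ε Γ ω t p).2 - (v ε Γ ω t q).2 =
        -(p.1 - q.1) - ε * ((p.1 ^ 2 - 1) * (p.2 - q.2) + (p.1 + q.1) * q.2 * (p.1 - q.1)) := by
      simp only [v]; ring
    rw [key]
    have b1 : |(p.1 ^ 2 - 1) * (p.2 - q.2)| ≤ (ρ ^ 2 + 1) * D := by
      rw [abs_mul]; exact mul_le_mul e1 hd2 (abs_nonneg _) (by positivity)
    have b2 : |(p.1 + q.1) * q.2 * (p.1 - q.1)| ≤ 2 * ρ * ρ * D := by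
      rw [abs_mul, abs_mul]
      exact mul_le_mul (mul_le_mul e2 hq2 (abs_nonneg _) (by positivity)) hd1 (abs_nonneg _)
        (by positivity)
    calc |(-(p.1 - q.1) - ε * ((p.1 ^ 2 - 1) * (p.2 - q.2) + (p.1 + q.1) * q.2 * (p.1 - q.1)))|
        ≤ |(-(p.1 - q.1))| + |ε * ((p.1 ^ 2 - 1) * (p.2 - q.2) + (p.1 + q.1) * q.2 * (p.1 - q.1))| :=
          abs_sub _ _
      _ ≤ |p.1 - q.1| + ε * (|(p.1 ^ 2 - 1) * (p.2 - q.2)| + |(p.1 + q.1) * q.2 * (p.1 - q.1)|) := by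
          rw [abs_neg, abs_mul, abs_of_nonneg hε]
          gcongr
          exact abs_add_le _ _
      _ ≤ D + ε * ((ρ ^ 2 + 1) * D + 2 * ρ * ρ * D) := by gcongr
      _ ≤ (2 + ε * (3 * ρ ^ 2 + 1)) * D := by nlinarith [hD0, mul_nonneg hε hD0]

noncomputable def Cb (ε Γ : ℝ) (ρ : ℝ) : ℝ := ρ + ε * (ρ ^ 2 + 1) * ρ + |Γ| + 1

lemma Cb_pos (ε Γ : ℝ) (hε : 0 ≤ ε) {ρ : ℝ} (hρ : 0 ≤ ρ) : 0 < Cb ε Γ ρ := by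
  unfold Cb; positivity

lemma Cb_mono (ε Γ : ℝ) (hε : 0 ≤ ε) {a b : ℝ} (ha : 0 ≤ a) (hab : a ≤ b) :
    Cb ε Γ a ≤ Cb ε Γ b := by
  unfold Cb
  have hb : 0 ≤ b := ha.trans hab
  gcongr

lemma norm_v_le (ε Γ ω : ℝ) (hε : 0 ≤ ε) {ρ : ℝ} (hρ : 0 ≤ ρ) (t : ℝ) {p : ℝ × ℝ}
    (hp : p ∈ Metric.closedBall (0 : ℝ × ℝ) ρ) : ‖v ε Γ ω t p‖ ≤ Cb ε Γ ρ := by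
  obtain ⟨hp1, hp2⟩ := coord_le hp
  rw [Prod.norm_def]
  have hΓ : |Γ * Real.cos (ω * t)| ≤ |Γ| := by
    rw [abs_mul]
    calc |Γ| * |Real.cos (ω * t)| ≤ |Γ| * 1 :=
          mul_le_mul_of_nonneg_left (Real.abs_cos_le_one _) (abs_nonneg _)
      _ = |Γ| := mul_one _
  apply max_le
  · show ‖(v ε Γ ω t p).1‖ ≤ _
    simp only [v, Real.norm_eq_abs]
    unfold Cb
    nlinarith [abs_nonneg Γ, mul_nonneg (mul_nonneg hε (by positivity : (0:ℝ) ≤ ρ ^ 2 + 1)) hρ]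
  · show ‖(v ε Γ ω t p).2‖ ≤ _
    simp only [v, Real.norm_eq_abs]
    have e1 : |p.1 ^ 2 - 1| ≤ ρ ^ 2 + 1 := by
      have h3 : p.1 ^ 2 ≤ ρ ^ 2 := by nlinarith [abs_nonneg p.1, sq_abs p.1]
      calc |p.1 ^ 2 - 1| ≤ |p.1 ^ 2| + |(1:ℝ)| := abs_sub _ _
        _ ≤ ρ ^ 2 + 1 := by rw [abs_of_nonneg (sq_nonneg _), abs_one]; linarith
    have hA : |(-p.1 - ε * (p.1 ^ 2 - 1) * p.2)| ≤ ρ + ε * (ρ ^ 2 + 1) * ρ := by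
      calc |(-p.1 - ε * (p.1 ^ 2 - 1) * p.2)| ≤ |(-p.1)| + |ε * (p.1 ^ 2 - 1) * p.2| := abs_sub _ _
        _ = |p.1| + ε * |p.1 ^ 2 - 1| * |p.2| := by
            rw [abs_neg, abs_mul, abs_mul, abs_of_nonneg hε]
        _ ≤ ρ + ε * (ρ ^ 2 + 1) * ρ :=
            add_le_add hp1 (mul_le_mul (mul_le_mul_of_nonneg_left e1 hε) hp2 (abs_nonneg _)
              (by positivity))
    calc |(-p.1 - ε * (p.1 ^ 2 - 1) * p.2 + Γ * Real.cos (ω * t))|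
        ≤ |(-p.1 - ε * (p.1 ^ 2 - 1) * p.2)| + |Γ * Real.cos (ω * t)| := abs_add_le _ _
      _ ≤ (ρ + ε * (ρ ^ 2 + 1) * ρ) + |Γ| := add_le_add hA hΓ
      _ ≤ Cb ε Γ ρ := by unfold Cb; linarith

lemma hasDerivWithinAt_fst {f : ℝ → ℝ × ℝ} {c : ℝ × ℝ} {s : Set ℝ} {x : ℝ}
    (h : HasDerivWithinAt f c s x) : HasDerivWithinAt (fun t => (f t).1) c.1 s x := by
  have h2 := (hasDerivWithinAt_iff_hasFDerivWithinAt.mp h).fst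
  simpa using h2.hasDerivWithinAt

lemma hasDerivWithinAt_snd {f : ℝ → ℝ × ℝ} {c : ℝ × ℝ} {s : Set ℝ} {x : ℝ}
    (h : HasDerivWithinAt f c s x) : HasDerivWithinAt (fun t => (f t).2) c.2 s x := by
  have h2 := (hasDerivWithinAt_iff_hasFDerivWithinAt.mp h).snd
  simpa using h2.hasDerivWithinAt

/-- local existence with a quantitative step size -/
lemma step (ε Γ ω : ℝ) (hε : 0 ≤ ε) (s : ℝ) (x₀ : ℝ × ℝ) (δ : ℝ) (hδ : 0 < δ)
    (hδC : Cb ε Γ (‖x₀‖ + 1) * δ ≤ 1) :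
    ∃ f : ℝ → ℝ × ℝ, f s = x₀ ∧
      ∀ t ∈ Icc s (s + δ), HasDerivWithinAt f (v ε Γ ω t (f t)) (Icc s (s + δ)) t := by
  have hx : (0:ℝ) ≤ ‖x₀‖ + 1 := by positivity
  have hsub : Metric.closedBall x₀ 1 ⊆ Metric.closedBall (0 : ℝ × ℝ) (‖x₀‖ + 1) := by
    apply Metric.closedBall_subset_closedBall'
    rw [dist_zero_right]
    linarith
  have hpl : IsPicardLindelof (v ε Γ ω) (tmin := s) (tmax := s + δ) ⟨s, ⟨le_refl s, by linarith⟩⟩ x₀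
      1 0 (Real.toNNReal (Cb ε Γ (‖x₀‖ + 1))) (Real.toNNReal (2 + ε * (3 * (‖x₀‖ + 1) ^ 2 + 1))) := by
    constructor
    · exact fun t _ => (lip ε Γ ω hε hx t).mono (by simpa using hsub)
    · exact fun x _ => (cont_v ε Γ ω x).continuousOn
    · exact fun t _ x hx' =>
        (norm_v_le ε Γ ω hε hx t (hsub (by simpa using hx'))).trans (Real.le_coe_toNNReal _)
    · have : max (s + δ - s) (s - s) = δ := by
        rw [max_eq_left] <;> simp [hδ.le]
      rw [Real.coe_toNNReal _ (Cb_pos ε Γ hε hx).le]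
      simpa [max_eq_left hδ.le] using hδC
  exact hpl.exists_eq_forall_mem_Icc_hasDerivWithinAt₀

lemma gronwallBound_mono {δ K e x y : ℝ} (hδ : 0 ≤ δ) (he : 0 ≤ e) (hK : 0 ≤ K) (h : x ≤ y) :
    gronwallBound δ K e x ≤ gronwallBound δ K e y := by
  rcases eq_or_lt_of_le hK with hK0 | hKpos
  · rw [← hK0]
    simp only [gronwallBound_K0]
    nlinarith
  · simp only [gronwallBound_of_K_ne_0 hKpos.ne']
    have hexp : Real.exp (K * x) ≤ Real.exp (K * y) :=
      Real.exp_le_exp.2 (mul_le_mul_of_nonneg_left h hKpos.le)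
    have heK : 0 ≤ e / K := div_nonneg he hKpos.le
    nlinarith

/-- Grönwall energy bound for solutions -/
lemma energy (ε Γ ω : ℝ) (hε : 0 ≤ ε) {a b : ℝ} {f : ℝ → ℝ × ℝ}
    (hf : ∀ t ∈ Icc a b, HasDerivWithinAt f (v ε Γ ω t (f t)) (Icc a b) t) :
    ∀ t ∈ Icc a b, (f t).1 ^ 2 + (f t).2 ^ 2 ≤
      gronwallBound ((f a).1 ^ 2 + (f a).2 ^ 2) (2 * ε + |Γ|) (2 * ε + |Γ|) (t - a) := by
  have hcont : ContinuousOn f (Icc a b) := fun t ht => (hf t ht).continuousWithinAt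
  apply le_gronwallBound_of_liminf_deriv_right_le
    (f' := fun t => 2 * (f t).1 * (f t).2 + 2 * (f t).2 * (v ε Γ ω t (f t)).2)
  · exact ((hcont.fst.pow 2).add (hcont.snd.pow 2))
  · intro x hx r hr
    have hx' : HasDerivWithinAt f (v ε Γ ω x (f x)) (Ici x) x :=
      (hf x (Ico_subset_Icc_self hx)).mono_of_mem_nhdsWithin (Icc_mem_nhdsGE_of_mem hx)
    have hφ := hasDerivWithinAt_fst hx'
    have hψ := hasDerivWithinAt_snd hx'
    have hE : HasDerivWithinAt (fun t => (f t).1 ^ 2 + (f t).2 ^ 2)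
        (2 * (f x).1 * (f x).2 + 2 * (f x).2 * (v ε Γ ω x (f x)).2) (Ici x) x := by
      have h1 := (hφ.pow 2).add (hψ.pow 2)
      refine h1.congr_deriv ?_
      have : (v ε Γ ω x (f x)).1 = (f x).2 := rfl
      rw [this]
      ring
    have := hE.liminf_right_slope_le hr
    apply this.mono
    intro z hz
    rwa [slope_def_field, div_eq_inv_mul] at hz
  · exact le_refl _
  · intro x hx
    have hc : |Real.cos (ω * x)| ≤ 1 := Real.abs_cos_le_one _
    have h2 : (v ε Γ ω x (f x)).2 =
        -(f x).1 - ε * ((f x).1 ^ 2 - 1) * (f x).2 + Γ * Real.cos (ω * x) := rfl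
    rw [h2]
    set φ := (f x).1
    set ψ := (f x).2
    set c := Real.cos (ω * x)
    have h3 : Γ * ψ * c ≤ |Γ| * |ψ| := by
      calc Γ * ψ * c ≤ |Γ * ψ * c| := le_abs_self _
        _ = |Γ| * |ψ| * |c| := by rw [abs_mul, abs_mul]
        _ ≤ |Γ| * |ψ| * 1 := by
            apply mul_le_mul_of_nonneg_left hc (by positivity)
        _ = |Γ| * |ψ| := mul_one _
    have h4 : 2 * (|Γ| * |ψ|) ≤ |Γ| * (ψ ^ 2 + 1) := by
      nlinarith [sq_nonneg (|ψ| - 1), abs_nonneg Γ, sq_abs ψ]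
    nlinarith [mul_nonneg (mul_nonneg hε (sq_nonneg φ)) (sq_nonneg ψ), sq_abs ψ,
      mul_nonneg hε (sq_nonneg ψ), abs_nonneg Γ, sq_nonneg φ]

lemma sol_norm_le (ε Γ ω : ℝ) (hε : 0 ≤ ε) {a b : ℝ} {f : ℝ → ℝ × ℝ} (hab : a ≤ b)
    (hf : ∀ t ∈ Icc a b, HasDerivWithinAt f (v ε Γ ω t (f t)) (Icc a b) t)
    (t : ℝ) (ht : t ∈ Icc a b) :
    ‖f t‖ ≤ Real.sqrt (gronwallBound ((f a).1 ^ 2 + (f a).2 ^ 2) (2 * ε + |Γ|) (2 * ε + |Γ|)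
      (b - a)) := by
  have hE := energy ε Γ ω hε hf t ht
  have hEb : (f t).1 ^ 2 + (f t).2 ^ 2 ≤ gronwallBound ((f a).1 ^ 2 + (f a).2 ^ 2)
      (2 * ε + |Γ|) (2 * ε + |Γ|) (b - a) :=
    hE.trans (gronwallBound_mono (by positivity) (by positivity) (by positivity)
      (by linarith [ht.2]))
  have hsq : ‖f t‖ ^ 2 ≤ (f t).1 ^ 2 + (f t).2 ^ 2 := by
    rw [Prod.norm_def]
    rcases max_cases ‖(f t).1‖ ‖(f t).2‖ with ⟨hm, _⟩ | ⟨hm, _⟩ <;> rw [hm] <;>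
      simp only [Real.norm_eq_abs, sq_abs] <;> nlinarith [sq_nonneg (f t).1, sq_nonneg (f t).2]
  have h2 := Real.abs_le_sqrt (hsq.trans hEb)
  rwa [abs_of_nonneg (norm_nonneg _)] at h2

lemma glue (ε Γ ω : ℝ) {a s c : ℝ} (has : a ≤ s) (hsc : s ≤ c) {g f : ℝ → ℝ × ℝ}
    (hg : ∀ t ∈ Icc a s, HasDerivWithinAt g (v ε Γ ω t (g t)) (Icc a s) t)
    (hf : ∀ t ∈ Icc s c, HasDerivWithinAt f (v ε Γ ω t (f t)) (Icc s c) t)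
    (hgf : f s = g s) :
    ∃ h : ℝ → ℝ × ℝ, (∀ t ∈ Icc a s, h t = g t) ∧
      ∀ t ∈ Icc a c, HasDerivWithinAt h (v ε Γ ω t (h t)) (Icc a c) t := by
  classical
  set h : ℝ → ℝ × ℝ := fun t => if t ≤ s then g t else f t with hhdef
  have hhg : ∀ t ∈ Icc a s, h t = g t := fun t ht => if_pos ht.2
  have hhf : ∀ t ∈ Icc s c, h t = f t := by
    intro t ht
    by_cases hts : t ≤ s
    · have hts' : t = s := le_antisymm hts ht.1
      subst hts'
      simp only [hhdef, if_pos le_rfl, hgf]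
    · exact if_neg hts
  refine ⟨h, hhg, ?_⟩
  intro t ht
  rcases lt_trichotomy t s with hlt | heq | hgt
  · have htas : t ∈ Icc a s := ⟨ht.1, hlt.le⟩
    have hmem : Icc a s ∈ nhdsWithin t (Icc a c) := by
      refine Filter.mem_of_superset (Filter.inter_mem self_mem_nhdsWithin
        (mem_nhdsWithin_of_mem_nhds (Iio_mem_nhds hlt))) ?_
      rintro u ⟨hu1, hu2⟩
      exact ⟨hu1.1, le_of_lt hu2⟩
    have h1 := (hg t htas).mono_of_mem_nhdsWithin hmem
    rw [hhg t htas]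
    apply h1.congr_of_eventuallyEq ?_ (hhg t htas)
    filter_upwards [hmem] with u hu using hhg u hu
  · subst heq
    have hta : t ∈ Icc a t := right_mem_Icc.mpr has
    have htc : t ∈ Icc t c := left_mem_Icc.mpr hsc
    have hL : HasDerivWithinAt h (v ε Γ ω t (g t)) (Icc a t) t :=
      (hg t hta).congr (fun u hu => hhg u hu) (hhg t hta)
    have hR : HasDerivWithinAt h (v ε Γ ω t (g t)) (Icc t c) t := by
      have h2 := (hf t htc).congr (fun u hu => hhf u hu) (hhf t htc)
      rwa [hgf] at h2
    have hU := hL.union hR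
    rw [hhg t hta]
    apply hU.mono
    intro u hu
    rcases le_total u t with h3 | h3
    · exact Or.inl ⟨hu.1, h3⟩
    · exact Or.inr ⟨h3, hu.2⟩
  · have htsc : t ∈ Icc s c := ⟨hgt.le, ht.2⟩
    have hmem : Icc s c ∈ nhdsWithin t (Icc a c) := by
      refine Filter.mem_of_superset (Filter.inter_mem self_mem_nhdsWithin
        (mem_nhdsWithin_of_mem_nhds (Ioi_mem_nhds hgt))) ?_
      rintro u ⟨hu1, hu2⟩
      exact ⟨le_of_lt hu2, hu1.2⟩
    have h1 := (hf t htsc).mono_of_mem_nhdsWithin hmem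
    rw [hhf t htsc]
    apply h1.congr_of_eventuallyEq ?_ (hhf t htsc)
    have hmem2 : Icc a c ∩ Ioi s ∈ nhdsWithin t (Icc a c) :=
      Filter.inter_mem self_mem_nhdsWithin (mem_nhdsWithin_of_mem_nhds (Ioi_mem_nhds hgt))
    filter_upwards [hmem2] with u hu using if_neg (not_le.mpr hu.2)

lemma solveOn (ε Γ ω : ℝ) (hε : 0 ≤ ε) (t₀ : ℝ) (x₀ : ℝ × ℝ) (T : ℝ) (hT : t₀ ≤ T) :
    ∃ f : ℝ → ℝ × ℝ, f t₀ = x₀ ∧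
      ∀ t ∈ Icc t₀ T, HasDerivWithinAt f (v ε Γ ω t (f t)) (Icc t₀ T) t := by
  set K := 2 * ε + |Γ| with hK
  set B := Real.sqrt (gronwallBound (x₀.1 ^ 2 + x₀.2 ^ 2) K K (T - t₀)) with hBdef
  have hB0 : 0 ≤ B := Real.sqrt_nonneg _
  have hCpos : 0 < Cb ε Γ (B + 1) := Cb_pos ε Γ hε (by linarith)
  set δ := 1 / Cb ε Γ (B + 1) with hδdef
  have hδpos : 0 < δ := by positivity
  have key : ∀ n : ℕ, ∃ f : ℝ → ℝ × ℝ, f t₀ = x₀ ∧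
      ∀ t ∈ Icc t₀ (min T (t₀ + n * δ)),
        HasDerivWithinAt f (v ε Γ ω t (f t)) (Icc t₀ (min T (t₀ + n * δ))) t := by
    intro n
    induction n with
    | zero =>
      refine ⟨fun _ => x₀, rfl, ?_⟩
      have hmin : min T (t₀ + (0:ℕ) * δ) = t₀ := by
        simp only [Nat.cast_zero, zero_mul, add_zero]
        exact min_eq_right hT
      rw [hmin]
      intro t ht
      rw [Icc_self, mem_singleton_iff] at ht
      subst ht
      rw [Icc_self, hasDerivWithinAt_iff_hasFDerivWithinAt]
      simp [HasFDerivWithinAt, nhdsWithin_singleton, hasFDerivAtFilter_iff_isLittleO,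
        Asymptotics.isLittleO_pure]
    | succ n ih =>
      obtain ⟨g, hg0, hg⟩ := ih
      set u := min T (t₀ + n * δ) with hu
      have hnδ : 0 ≤ (n:ℝ) * δ := mul_nonneg n.cast_nonneg hδpos.le
      have hu1 : t₀ ≤ u := le_min hT (by linarith)
      have hu2 : u ≤ T := min_le_left _ _
      by_cases hTn : T ≤ t₀ + n * δ
      · have h1 : u = T := min_eq_left hTn
        have h2 : min T (t₀ + (n + 1 : ℕ) * δ) = T := by
          apply min_eq_left
          push_cast
          nlinarith
        rw [h2]
        rw [h1] at hg
        exact ⟨g, hg0, hg⟩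
      · push_neg at hTn
        have huT : u = t₀ + n * δ := min_eq_right hTn.le
        have hgu : ‖g u‖ ≤ B := by
          have h1 := sol_norm_le ε Γ ω hε hu1 hg u (right_mem_Icc.mpr hu1)
          rw [hg0] at h1
          refine h1.trans (Real.sqrt_le_sqrt ?_)
          exact gronwallBound_mono (by positivity) (by positivity) (by positivity)
            (by linarith)
        set δ' := min δ (T - u) with hδ'def
        have hδ'pos : 0 < δ' := lt_min hδpos (by rw [huT]; linarith)
        have hCb' : Cb ε Γ (‖g u‖ + 1) * δ' ≤ 1 := by
          have hm : Cb ε Γ (‖g u‖ + 1) ≤ Cb ε Γ (B + 1) :=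
            Cb_mono ε Γ hε (by positivity) (by linarith)
          calc Cb ε Γ (‖g u‖ + 1) * δ' ≤ Cb ε Γ (B + 1) * δ :=
                mul_le_mul hm (min_le_left _ _) hδ'pos.le hCpos.le
            _ = 1 := by rw [hδdef]; field_simp
        obtain ⟨f, hf0, hf⟩ := step ε Γ ω hε u (g u) δ' hδ'pos hCb'
        obtain ⟨h, hhg, hh⟩ := glue ε Γ ω hu1 (by linarith : u ≤ u + δ') hg hf hf0
        have hend : u + δ' = min T (t₀ + (n + 1 : ℕ) * δ) := by
          push_cast
          rw [hδ'def, huT]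
          rcases le_total δ (T - (t₀ + n * δ)) with h3 | h3
          · rw [min_eq_left h3, min_eq_right (by linarith)]
            ring
          · rw [min_eq_right h3, min_eq_left (by linarith)]
            ring
        refine ⟨h, ?_, by rw [← hend]; exact hh⟩
        rw [hhg t₀ (left_mem_Icc.mpr hu1), hg0]
  obtain ⟨n, hn⟩ := exists_nat_ge ((T - t₀) / δ)
  obtain ⟨f, hf0, hf⟩ := key n
  have hmin : min T (t₀ + n * δ) = T := by
    apply min_eq_left
    rw [div_le_iff₀ hδpos] at hn
    linarith
  rw [hmin] at hf
  exact ⟨f, hf0, hf⟩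

lemma uniq (ε Γ ω : ℝ) (hε : 0 ≤ ε) {a b : ℝ} {f g : ℝ → ℝ × ℝ} (hab : a ≤ b)
    (hf : ∀ t ∈ Icc a b, HasDerivWithinAt f (v ε Γ ω t (f t)) (Icc a b) t)
    (hg : ∀ t ∈ Icc a b, HasDerivWithinAt g (v ε Γ ω t (g t)) (Icc a b) t)
    (h0 : f a = g a) : EqOn f g (Icc a b) := by
  set ρ := Real.sqrt (gronwallBound ((f a).1 ^ 2 + (f a).2 ^ 2) (2 * ε + |Γ|) (2 * ε + |Γ|)
    (b - a)) with hρdef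
  have hρ0 : 0 ≤ ρ := Real.sqrt_nonneg _
  refine ODE_solution_unique_of_mem_Icc_right (fun t _ => lip ε Γ ω hε hρ0 t)
    (fun t ht => (hf t ht).continuousWithinAt) ?_ ?_
    (fun t ht => (hg t ht).continuousWithinAt) ?_ ?_ h0
  · intro t ht
    exact (hf t (Ico_subset_Icc_self ht)).mono_of_mem_nhdsWithin (Icc_mem_nhdsGE_of_mem ht)
  · intro t ht
    exact Metric.mem_closedBall.mpr (by
      rw [dist_zero_right]
      exact sol_norm_le ε Γ ω hε hab hf t (Ico_subset_Icc_self ht))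
  · intro t ht
    exact (hg t (Ico_subset_Icc_self ht)).mono_of_mem_nhdsWithin (Icc_mem_nhdsGE_of_mem ht)
  · intro t ht
    refine Metric.mem_closedBall.mpr ?_
    rw [dist_zero_right]
    have h2 := sol_norm_le ε Γ ω hε hab hg t (Ico_subset_Icc_self ht)
    rwa [← h0] at h2

lemma global (ε Γ ω : ℝ) (hε : 0 ≤ ε) (t₀ : ℝ) (x₀ : ℝ × ℝ) :
    ∃ f : ℝ → ℝ × ℝ, f t₀ = x₀ ∧
      ∀ t ∈ Ici t₀, HasDerivWithinAt f (v ε Γ ω t (f t)) (Ici t₀) t := by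
  have hsol : ∀ n : ℕ, ∃ f : ℝ → ℝ × ℝ, f t₀ = x₀ ∧
      ∀ t ∈ Icc t₀ (t₀ + n), HasDerivWithinAt f (v ε Γ ω t (f t)) (Icc t₀ (t₀ + n)) t :=
    fun n => solveOn ε Γ ω hε t₀ x₀ (t₀ + n) (le_add_of_nonneg_right n.cast_nonneg)
  choose F hF0 hF using hsol
  have consist : ∀ m n : ℕ, m ≤ n → EqOn (F m) (F n) (Icc t₀ (t₀ + m)) := by
    intro m n hmn
    have hsub : Icc t₀ (t₀ + (m:ℝ)) ⊆ Icc t₀ (t₀ + (n:ℝ)) :=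
      Icc_subset_Icc_right (add_le_add_right (Nat.cast_le.mpr hmn) t₀)
    refine uniq ε Γ ω hε (le_add_of_nonneg_right m.cast_nonneg) (hF m) ?_
      (by rw [hF0 m, hF0 n])
    intro t ht
    exact HasDerivWithinAt.mono (hF n t (hsub ht)) hsub
  set sol : ℝ → ℝ × ℝ := fun t => F (⌈t - t₀⌉₊ + 1) t with hsoldef
  have agree : ∀ (m : ℕ) (t : ℝ), t ∈ Icc t₀ (t₀ + m) → sol t = F m t := by
    intro m t ht
    have htceil : t ∈ Icc t₀ (t₀ + ((⌈t - t₀⌉₊ + 1 : ℕ) : ℝ)) := by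
      refine ⟨ht.1, ?_⟩
      push_cast
      have h2 := Nat.le_ceil (t - t₀)
      linarith
    rcases le_total (⌈t - t₀⌉₊ + 1) m with h | h
    · exact consist _ m h htceil
    · exact (consist m _ h ht).symm
  refine ⟨sol, hF0 _, ?_⟩
  intro t ht
  set m : ℕ := ⌈t - t₀⌉₊ + 1 with hm
  have htm : t < t₀ + m := by
    have h2 := Nat.le_ceil (t - t₀)
    have h3 : ((⌈t - t₀⌉₊ : ℝ)) < m := by rw [hm]; push_cast; linarith
    linarith
  have htmem : t ∈ Icc t₀ (t₀ + (m:ℝ)) := ⟨ht, htm.le⟩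
  have hmem : Icc t₀ (t₀ + (m:ℝ)) ∈ nhdsWithin t (Ici t₀) := by
    refine Filter.mem_of_superset (Filter.inter_mem self_mem_nhdsWithin
      (mem_nhdsWithin_of_mem_nhds (Iio_mem_nhds htm))) ?_
    rintro u ⟨hu1, hu2⟩
    exact ⟨hu1, le_of_lt hu2⟩
  have h1 := (hF m t htmem).mono_of_mem_nhdsWithin hmem
  have heq : sol t = F m t := agree m t htmem
  rw [heq]
  apply h1.congr_of_eventuallyEq ?_ heq
  filter_upwards [hmem] with u hu using agree m u hu

end VdPaux


/-- Global solvability of the forced van der Pol equation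
`φ'' + ε (φ² - 1) φ' + φ = Γ cos (ω t)` (with `ε ≥ 0`): for all initial data
`φ t₀ = α`, `φ' t₀ = β₀` there is a solution on all of `[t₀, +∞)`, stated via the
equivalent system `φ' = ψ`, `ψ' = -φ - ε (φ² - 1) ψ + Γ cos (ω t)`. -/
theorem van_der_pol_forced_global
    (t₀ ε Γ ω : ℝ) (hε : 0 ≤ ε) (α β₀ : ℝ) :
    ∃ φ ψ : ℝ → ℝ, φ t₀ = α ∧ ψ t₀ = β₀ ∧
      ∀ t ∈ Ici t₀,
        HasDerivWithinAt φ (ψ t) (Ici t₀) t ∧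
        HasDerivWithinAt ψ
          (-φ t - ε * (φ t ^ 2 - 1) * ψ t + Γ * Real.cos (ω * t)) (Ici t₀) t := by
  obtain ⟨f, hf0, hf⟩ := VdPaux.global ε Γ ω hε t₀ (α, β₀)
  refine ⟨fun t => (f t).1, fun t => (f t).2, by simp [hf0], by simp [hf0], ?_⟩
  intro t ht
  have h := hf t ht
  exact ⟨VdPaux.hasDerivWithinAt_fst h, VdPaux.hasDerivWithinAt_snd h⟩
end

section
/- Let $a \in \mathbb{R}$. Then for every $\alpha, \beta \in \mathbb{R}$ the system $\phi' = -(\phi^2 + \psi^2 - 1)\phi + a\sin t\,\psi$, $\psi' = -a\sin t\,\phi - (\phi^2 + \psi^2 - 1)\psi$ has a solution $(\phi, \psi)$ on the whole half-line $[t_0, +\infty)$ with $\phi(t_0) = \alpha$ and $\psi(t_0) = \beta$. -/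
open Set

/-- Global solvability of the system (1.15):
`φ' = -(φ² + ψ² - 1) φ + a sin t · ψ`, `ψ' = -a sin t · φ - (φ² + ψ² - 1) ψ`
for all initial data at `t₀`. -/
theorem system_115_global
    (t₀ a : ℝ) (α β : ℝ) :
    ∃ φ ψ : ℝ → ℝ, φ t₀ = α ∧ ψ t₀ = β ∧
      ∀ t ∈ Ici t₀,
        HasDerivWithinAt φ
          (-(φ t ^ 2 + ψ t ^ 2 - 1) * φ t + a * Real.sin t * ψ t) (Ici t₀) t ∧
        HasDerivWithinAt ψ
          (-(a * Real.sin t) * φ t - (φ t ^ 2 + ψ t ^ 2 - 1) * ψ t) (Ici t₀) t := by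
  obtain ⟨r, hr⟩ : ∃ r : ℝ, r = α ^ 2 + β ^ 2 := ⟨_, rfl⟩
  obtain ⟨D, hDdef⟩ : ∃ D : ℝ → ℝ,
      D = fun t => 1 + r * (Real.exp (2 * (t - t₀)) - 1) := ⟨_, rfl⟩
  obtain ⟨g, hgdef⟩ : ∃ g : ℝ → ℝ,
      g = fun t => Real.exp (t - t₀) / Real.sqrt (D t) := ⟨_, rfl⟩
  obtain ⟨δ, hδdef⟩ : ∃ δ : ℝ → ℝ,
      δ = fun t => a * (Real.cos t - Real.cos t₀) := ⟨_, rfl⟩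
  have hrnn : 0 ≤ r := by rw [hr]; positivity
  refine ⟨fun t => g t * (α * Real.cos (δ t) - β * Real.sin (δ t)),
          fun t => g t * (β * Real.cos (δ t) + α * Real.sin (δ t)), ?_, ?_, ?_⟩
  · rw [hgdef, hδdef, hDdef]; simp
  · rw [hgdef, hδdef, hDdef]; simp
  intro t ht
  have he1 : (1:ℝ) ≤ Real.exp (2 * (t - t₀)) := by
    rw [show (1:ℝ) = Real.exp 0 by simp]
    exact Real.exp_le_exp.2 (by nlinarith [mem_Ici.1 ht])
  have hDpos : 0 < D t := by rw [hDdef]; dsimp only; nlinarith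
  have hS : 0 < Real.sqrt (D t) := Real.sqrt_pos.2 hDpos
  have hS2 : Real.sqrt (D t) ^ 2 = D t := Real.sq_sqrt hDpos.le
  have hE2 : Real.exp (2 * (t - t₀)) = Real.exp (t - t₀) ^ 2 := by
    rw [two_mul, Real.exp_add, sq]
  have hD' : HasDerivAt D (r * (Real.exp (2 * (t - t₀)) * 2)) t := by
    rw [hDdef]
    have hlin : HasDerivAt (fun t : ℝ => 2 * (t - t₀)) 2 t := by
      simpa using ((hasDerivAt_id t).sub_const t₀).const_mul 2
    simpa using (((hlin.exp).sub_const 1).const_mul r).const_add 1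
  have hnum : HasDerivAt (fun t : ℝ => Real.exp (t - t₀)) (Real.exp (t - t₀)) t := by
    simpa using ((hasDerivAt_id t).sub_const t₀).exp
  have hsqrt : HasDerivAt (fun t => Real.sqrt (D t))
      ((r * (Real.exp (2 * (t - t₀)) * 2)) / (2 * Real.sqrt (D t))) t :=
    hD'.sqrt hDpos.ne'
  have hg : HasDerivAt g ((1 - r * g t ^ 2) * g t) t := by
    rw [hgdef]
    have := hnum.div hsqrt hS.ne'
    refine this.congr_deriv (Eq.symm ?_)
    rw [hE2]
    field_simp
  have hδ' : HasDerivAt δ (-(a * Real.sin t)) t := by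
    rw [hδdef]
    simpa [mul_comm, mul_assoc] using
      ((Real.hasDerivAt_cos t).sub_const (Real.cos t₀)).const_mul a
  have hc : HasDerivAt (fun t => Real.cos (δ t))
      (-Real.sin (δ t) * -(a * Real.sin t)) t := hδ'.cos
  have hs : HasDerivAt (fun t => Real.sin (δ t))
      (Real.cos (δ t) * -(a * Real.sin t)) t := hδ'.sin
  have h1 : Real.sin (δ t) ^ 2 + Real.cos (δ t) ^ 2 = 1 := Real.sin_sq_add_cos_sq _
  constructor
  · have := hg.mul ((hc.const_mul α).sub (hs.const_mul β))
    refine (this.congr_deriv ?_).hasDerivWithinAt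
    simp only [Pi.sub_apply]
    linear_combination
      (g t ^ 3 * (α * Real.cos (δ t) - β * Real.sin (δ t)) * (α ^ 2 + β ^ 2)) * h1 -
      (g t ^ 3 * (α * Real.cos (δ t) - β * Real.sin (δ t))) * hr
  · have := hg.mul ((hc.const_mul β).add (hs.const_mul α))
    refine (this.congr_deriv ?_).hasDerivWithinAt
    simp only [Pi.add_apply]
    linear_combination
      (g t ^ 3 * (β * Real.cos (δ t) + α * Real.sin (δ t)) * (α ^ 2 + β ^ 2)) * h1 -
      (g t ^ 3 * (β * Real.cos (δ t) + α * Real.sin (δ t))) * hr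
end
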